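/- arXiv:2305.13730 — 5 statements merged into one kernel-verified Lean document; each statement's English description precedes it below -/
import Mathlib

section
/- Fix an integer n ≥ 1. There exists a constant c > 0 such that for every odd prime power q and all matrices A, B ∈ M_n(𝔽_q), the quadratic matrix Gauss sum satisfies |G(A,B)| ≤ c · q^{(n² + ρ_A)/2}, where ρ_A is the radical invariant of A. -/
open scoped BigOperators

/-- The additive character `ψ(X) = exp((2πi/p)·Tr_{F/F_p}(Tr X))` on `n × n` matrices
over a finite field `F` of characteristic `p`. -/
noncomputable def psi (F : Type) [Field F] [Fintype F] {n : ℕ}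
    (X : Matrix (Fin n) (Fin n) F) : ℂ :=
  letI : Algebra (ZMod (ringChar F)) F := ZMod.algebra _ _
  Complex.exp (2 * Real.pi * Complex.I *
    (((Algebra.trace (ZMod (ringChar F)) F X.trace).val : ℂ) / (ringChar F : ℂ)))

/-- The radical `{X : Tr(A(XY+YX)) = 0 for all Y}` of the quadratic form
`X ↦ Tr(AX²)` on `M_n(F)`. -/
def radical (F : Type) [Field F] [Fintype F] {n : ℕ}
    (A : Matrix (Fin n) (Fin n) F) : Submodule F (Matrix (Fin n) (Fin n) F) where
  carrier := {X : Matrix (Fin n) (Fin n) F |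
    ∀ Y : Matrix (Fin n) (Fin n) F, (A * (X * Y + Y * X)).trace = 0}
  zero_mem' := by intro Y; simp
  add_mem' := by
    intro X₁ X₂ h₁ h₂ Y
    have e : A * ((X₁ + X₂) * Y + Y * (X₁ + X₂))
        = A * (X₁ * Y + Y * X₁) + A * (X₂ * Y + Y * X₂) := by noncomm_ring
    show (A * ((X₁ + X₂) * Y + Y * (X₁ + X₂))).trace = 0
    rw [e, Matrix.trace_add, h₁ Y, h₂ Y, add_zero]
  smul_mem' := by
    intro c X h Y
    have e : A * ((c • X) * Y + Y * (c • X)) = c • (A * (X * Y + Y * X)) := by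
      rw [smul_mul_assoc, Matrix.mul_smul, ← smul_add, Matrix.mul_smul]
    show (A * ((c • X) * Y + Y * (c • X))).trace = 0
    rw [e, Matrix.trace_smul, h Y, smul_zero]

/-- The radical invariant `ρ_A`: the `F`-dimension of the radical of `X ↦ Tr(AX²)`. -/
noncomputable def rho (F : Type) [Field F] [Fintype F] {n : ℕ}
    (A : Matrix (Fin n) (Fin n) F) : ℕ :=
  Module.finrank F (radical F A)

/-- The quadratic matrix Gauss sum `G(A,B) = Σ_X ψ(AX² + BX)`. -/
noncomputable def matGaussSum (F : Type) [Field F] [Fintype F] {n : ℕ}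
    (A B : Matrix (Fin n) (Fin n) F) : ℂ :=
  ∑ X : Matrix (Fin n) (Fin n) F, psi F (A * X ^ 2 + B * X)

/-- The matrix sphere `σ_T = {X ∈ M_n(F)^r : X₁² + ⋯ + X_r² = T}`. -/
def matSphere (F : Type) [Field F] [Fintype F] [DecidableEq F] {n : ℕ} (r : ℕ)
    (T : Matrix (Fin n) (Fin n) F) : Finset (Fin r → Matrix (Fin n) (Fin n) F) :=
  Finset.univ.filter (fun X => ∑ i, (X i) ^ 2 = T)

/-- The Fourier transform `f̂(M) = q^{-rn²} Σ_A f(A) conj(ψ(M·A))` on `M_n(F)^r`. -/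
noncomputable def matFourier (F : Type) [Field F] [Fintype F] {n r : ℕ}
    (f : (Fin r → Matrix (Fin n) (Fin n) F) → ℂ)
    (M : Fin r → Matrix (Fin n) (Fin n) F) : ℂ :=
  ((Fintype.card F : ℂ) ^ (r * n ^ 2))⁻¹ *
    ∑ A : Fin r → Matrix (Fin n) (Fin n) F, f A * (starRingEnd ℂ) (psi F (∑ i, M i * A i))

section AuxGauss

variable (F : Type) [Field F] [Fintype F] {n : ℕ}

/-- The composite trace map `M_n(F) →+ ZMod p`. -/
noncomputable def traceHom :
    Matrix (Fin n) (Fin n) F →+ ZMod (ringChar F) :=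
  letI : Algebra (ZMod (ringChar F)) F := ZMod.algebra _ _
  { toFun := fun X => Algebra.trace (ZMod (ringChar F)) F X.trace
    map_zero' := by simp
    map_add' := fun X Y => by simp [Matrix.trace_add] }

lemma neZero_ringChar : NeZero (ringChar F) :=
  ⟨(CharP.char_is_prime F (ringChar F)).ne_zero⟩

lemma psi_eq_char (X : Matrix (Fin n) (Fin n) F) :
    haveI : NeZero (ringChar F) := neZero_ringChar F
    psi F X = ZMod.stdAddChar (traceHom F X) := by
  haveI : NeZero (ringChar F) := neZero_ringChar F
  simp only [psi, traceHom, AddMonoidHom.coe_mk, ZeroHom.coe_mk,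
    ZMod.stdAddChar_apply, ZMod.toCircle_apply, mul_div_assoc]

lemma abs_psi (X : Matrix (Fin n) (Fin n) F) : ‖psi F X‖ = 1 := by
  haveI : NeZero (ringChar F) := neZero_ringChar F
  rw [psi_eq_char, ZMod.stdAddChar_apply, Circle.norm_coe]

lemma psi_add (X Y : Matrix (Fin n) (Fin n) F) : psi F (X + Y) = psi F X * psi F Y := by
  haveI : NeZero (ringChar F) := neZero_ringChar F
  rw [psi_eq_char, psi_eq_char, psi_eq_char, map_add, AddChar.map_add_eq_mul]

lemma psi_zero : psi F (0 : Matrix (Fin n) (Fin n) F) = 1 := by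
  haveI : NeZero (ringChar F) := neZero_ringChar F
  rw [psi_eq_char, map_zero, AddChar.map_zero_eq_one]

lemma psi_ne_zero (X : Matrix (Fin n) (Fin n) F) : psi F X ≠ 0 := by
  intro h
  have := abs_psi F X
  rw [h] at this; simp at this

lemma conj_psi (X : Matrix (Fin n) (Fin n) F) :
    (starRingEnd ℂ) (psi F X) = psi F (-X) := by
  have h1 : psi F X * psi F (-X) = 1 := by
    rw [← psi_add, add_neg_cancel, psi_zero]
  have h2 : (starRingEnd ℂ) (psi F X) * psi F X = 1 := by
    rw [Complex.conj_mul']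
    norm_cast
    rw [abs_psi]
    norm_num
  have := h1.trans h2.symm
  exact (mul_left_cancel₀ (psi_ne_zero F X) (by linear_combination this)).symm

lemma psi_of_trace_eq_zero (X : Matrix (Fin n) (Fin n) F) (h : X.trace = 0) :
    psi F X = 1 := by
  haveI : NeZero (ringChar F) := neZero_ringChar F
  rw [psi_eq_char]
  have : traceHom F X = 0 := by simp [traceHom, h]
  rw [this, AddChar.map_zero_eq_one]

lemma traceHom_eq_zero_of_psi_eq_one (X : Matrix (Fin n) (Fin n) F) (h : psi F X = 1) :
    traceHom F X = 0 := by
  haveI : NeZero (ringChar F) := neZero_ringChar F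
  rw [psi_eq_char] at h
  apply ZMod.injective_stdAddChar (N := ringChar F)
  rw [h, AddChar.map_zero_eq_one]

/-- If `psi F (A * (Z * Y + Y * Z)) = 1` for all `Y`, then `Z` lies in the radical. -/
lemma mem_radical_of_psi (A Z : Matrix (Fin n) (Fin n) F)
    (h : ∀ Y : Matrix (Fin n) (Fin n) F, psi F (A * (Z * Y + Y * Z)) = 1) :
    Z ∈ radical F A := by
  letI : Algebra (ZMod (ringChar F)) F := ZMod.algebra _ _
  intro Y
  by_contra ht
  obtain ⟨b, hb⟩ := FiniteField.trace_to_zmod_nondegenerate F ht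
  apply hb
  have e : A * (Z * (b • Y) + (b • Y) * Z) = b • (A * (Z * Y + Y * Z)) := by
    rw [mul_smul_comm, smul_mul_assoc, ← smul_add, mul_smul_comm]
  have h0 : traceHom F (A * (Z * (b • Y) + (b • Y) * Z)) = 0 :=
    traceHom_eq_zero_of_psi_eq_one F _ (h (b • Y))
  rw [e] at h0
  have : traceHom F (b • (A * (Z * Y + Y * Z)))
      = Algebra.trace (ZMod (ringChar F)) F (b * (A * (Z * Y + Y * Z)).trace) := by
    simp only [traceHom, AddMonoidHom.coe_mk, ZeroHom.coe_mk, Matrix.trace_smul, smul_eq_mul]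
  rw [this, mul_comm] at h0
  exact h0

/-- The inner character sum over the group `M_n(F)`. -/
lemma gaussInnerSum (A Z : Matrix (Fin n) (Fin n) F) [Decidable (Z ∈ radical F A)] :
    (∑ Y : Matrix (Fin n) (Fin n) F, psi F (A * (Z * Y + Y * Z)))
      = if Z ∈ radical F A then (Fintype.card (Matrix (Fin n) (Fin n) F) : ℂ) else 0 := by
  classical
  set χ : AddChar (Matrix (Fin n) (Fin n) F) ℂ :=
    { toFun := fun Y => psi F (A * (Z * Y + Y * Z))
      map_zero_eq_one' := by
        show psi F (A * (Z * 0 + 0 * Z)) = 1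
        simp only [mul_zero, zero_mul, add_zero, zero_add]
        exact psi_zero F
      map_add_eq_mul' := by
        intro Y₁ Y₂
        have e : A * (Z * (Y₁ + Y₂) + (Y₁ + Y₂) * Z)
            = A * (Z * Y₁ + Y₁ * Z) + A * (Z * Y₂ + Y₂ * Z) := by noncomm_ring
        show psi F _ = psi F _ * psi F _
        rw [e, psi_add] } with hχ
  have hsum : (∑ Y : Matrix (Fin n) (Fin n) F, psi F (A * (Z * Y + Y * Z))) = ∑ Y, χ Y := rfl
  rw [hsum, AddChar.sum_eq_ite]
  have hiff : χ = 0 ↔ Z ∈ radical F A := by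
    constructor
    · intro h0
      apply mem_radical_of_psi F A Z
      intro Y
      have h1 : χ Y = 1 := by rw [h0, AddChar.zero_apply]
      exact h1
    · intro hZ
      apply AddChar.ext
      intro Y
      show psi F (A * (Z * Y + Y * Z)) = (0 : AddChar _ ℂ) Y
      rw [AddChar.zero_apply]
      exact psi_of_trace_eq_zero F _ (hZ Y)
  by_cases h : Z ∈ radical F A
  · rw [if_pos (hiff.mpr h), if_pos h]
  · rw [if_neg (fun hc => h (hiff.mp hc)), if_neg h]

end AuxGauss

/-- Proposition 3.3 restated. -/
theorem matGaussSum_bound (n : ℕ) (hn : 1 ≤ n) :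
    ∃ c : ℝ, 0 < c ∧
      ∀ (F : Type) [Field F] [Fintype F],
        Odd (Fintype.card F) →
        ∀ A B : Matrix (Fin n) (Fin n) F,
          ‖matGaussSum F A B‖ ≤
            c * (Fintype.card F : ℝ) ^ ((((n : ℝ) ^ 2) + (rho F A : ℝ)) / 2) := by
  classical
  refine ⟨1, one_pos, ?_⟩
  intro F _ _ _hodd A B
  haveI : NeZero (ringChar F) := neZero_ringChar F
  set q : ℕ := Fintype.card F with hqdef
  have hq1 : 1 ≤ (q : ℝ) := by
    have := Fintype.card_pos (α := F)
    exact_mod_cast this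
  have hq0 : (0 : ℝ) ≤ (q : ℝ) := le_trans zero_le_one hq1
  set G : ℂ := matGaussSum F A B with hG
  -- cardinalities
  have hcardM : Fintype.card (Matrix (Fin n) (Fin n) F) = q ^ (n ^ 2) := by
    show Fintype.card (Fin n → Fin n → F) = _
    simp [Fintype.card_fun, sq, pow_mul]
    rfl
  have hfilter : (Finset.univ.filter (fun Z => Z ∈ radical F A)).card = q ^ rho F A := by
    have h1 : Nat.card ↥(radical F A) = q ^ rho F A := by
      rw [Nat.card_eq_fintype_card]; exact Module.card_eq_pow_finrank (K := F)
    have h2 : (Finset.univ.filter (fun Z => Z ∈ radical F A)).card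
        = Nat.card ↥(radical F A) := by
      rw [← Fintype.card_subtype]
      exact Nat.card_eq_fintype_card.symm
    rw [h2, h1]
  -- expand |G|^2
  have term : ∀ Y Z : Matrix (Fin n) (Fin n) F,
      psi F (A * (Y + Z) ^ 2 + B * (Y + Z)) * (starRingEnd ℂ) (psi F (A * Y ^ 2 + B * Y))
        = psi F (A * (Z * Y + Y * Z)) * psi F (A * Z ^ 2 + B * Z) := by
    intro Y Z
    rw [conj_psi, ← psi_add, ← psi_add]
    congr 1
    noncomm_ring
  have expand : G * (starRingEnd ℂ) G
      = ∑ Z : Matrix (Fin n) (Fin n) F, psi F (A * Z ^ 2 + B * Z) *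
          ∑ Y : Matrix (Fin n) (Fin n) F, psi F (A * (Z * Y + Y * Z)) := by
    rw [hG, matGaussSum, map_sum, Finset.sum_mul_sum]
    rw [Finset.sum_comm]
    have step : ∀ Y : Matrix (Fin n) (Fin n) F,
        (∑ X : Matrix (Fin n) (Fin n) F,
            psi F (A * X ^ 2 + B * X) * (starRingEnd ℂ) (psi F (A * Y ^ 2 + B * Y)))
          = ∑ Z : Matrix (Fin n) (Fin n) F,
              psi F (A * (Z * Y + Y * Z)) * psi F (A * Z ^ 2 + B * Z) := by
      intro Y
      rw [← Equiv.sum_comp (Equiv.addLeft Y)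
        (fun X => psi F (A * X ^ 2 + B * X) * (starRingEnd ℂ) (psi F (A * Y ^ 2 + B * Y)))]
      refine Finset.sum_congr rfl fun Z _ => ?_
      simpa [Equiv.coe_addLeft] using term Y Z
    rw [Finset.sum_congr rfl (fun Y _ => step Y), Finset.sum_comm]
    refine Finset.sum_congr rfl fun Z _ => ?_
    rw [Finset.mul_sum]
    refine Finset.sum_congr rfl fun Y _ => mul_comm _ _
  -- use the inner sum evaluation
  have expand2 : G * (starRingEnd ℂ) G
      = ∑ Z : Matrix (Fin n) (Fin n) F, psi F (A * Z ^ 2 + B * Z) *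
          (if Z ∈ radical F A then (Fintype.card (Matrix (Fin n) (Fin n) F) : ℂ) else 0) := by
    rw [expand]
    exact Finset.sum_congr rfl fun Z _ => by rw [gaussInnerSum F A Z]
  -- bound |G|^2
  have habs2 : ‖G‖ ^ 2
      ≤ ((q ^ rho F A : ℕ) : ℝ) * ((q ^ (n ^ 2) : ℕ) : ℝ) := by
    have h1 : (‖G‖ : ℝ) ^ 2 = ‖G * (starRingEnd ℂ) G‖ := by
      rw [norm_mul, Complex.norm_conj, sq]
    rw [h1, expand2]
    refine le_trans (norm_sum_le _ _) ?_
    have hterm : ∀ Z : Matrix (Fin n) (Fin n) F,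
        ‖psi F (A * Z ^ 2 + B * Z) *
          (if Z ∈ radical F A then (Fintype.card (Matrix (Fin n) (Fin n) F) : ℂ) else 0)‖
        = (if Z ∈ radical F A then (Fintype.card (Matrix (Fin n) (Fin n) F) : ℝ) else 0) := by
      intro Z
      rw [norm_mul, abs_psi, one_mul]
      by_cases h : Z ∈ radical F A
      · rw [if_pos h, if_pos h, Complex.norm_natCast]
      · rw [if_neg h, if_neg h, norm_zero]
    rw [Finset.sum_congr rfl (fun Z _ => hterm Z), ← Finset.sum_filter,
      Finset.sum_const, nsmul_eq_mul]
    rw [hfilter, hcardM]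
  -- conclude
  have key : ‖G‖ ^ 2 ≤ ((q : ℝ) ^ (n ^ 2 + rho F A) : ℝ) := by
    calc ‖G‖ ^ 2 ≤ ((q ^ rho F A : ℕ) : ℝ) * ((q ^ (n ^ 2) : ℕ) : ℝ) := habs2
    _ = (q : ℝ) ^ (n ^ 2 + rho F A) := by push_cast; rw [← pow_add, add_comm]
  set s : ℝ := (q : ℝ) ^ ((((n : ℝ) ^ 2) + (rho F A : ℝ)) / 2) with hs
  have hs0 : 0 ≤ s := Real.rpow_nonneg hq0 _
  have hs2 : s ^ 2 = (q : ℝ) ^ (n ^ 2 + rho F A) := by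
    rw [hs, ← Real.rpow_natCast ((q:ℝ) ^ ((((n : ℝ) ^ 2) + (rho F A : ℝ)) / 2)) 2,
      ← Real.rpow_mul hq0]
    rw [show ((((n : ℝ) ^ 2) + (rho F A : ℝ)) / 2) * (2 : ℕ) = ((n ^ 2 + rho F A : ℕ) : ℝ) by
      push_cast; ring]
    rw [Real.rpow_natCast]
  rw [one_mul]
  have h2 : ‖G‖ ^ 2 ≤ s ^ 2 := by rw [hs2]; exact key
  have h3 := Real.sqrt_le_sqrt h2
  rwa [Real.sqrt_sq (norm_nonneg G), Real.sqrt_sq hs0] at h3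
end

section
/- Let r ≥ 4 be an integer. There exists a constant c > 0 such that for every odd prime power q and every T ∈ M_2(𝔽_q), the matrix sphere σ_T ⊆ (M_2(𝔽_q))^r satisfies |#σ_T − q^{4(r−1)}| ≤ c·q^{3r−1}; in particular #σ_T ∼ q^{4r−4} as q → ∞. -/
open scoped BigOperators

section Psi
variable (F : Type) [Field F] [Fintype F]

noncomputable def psiChar {n : ℕ} : AddChar (Matrix (Fin n) (Fin n) F) ℂ :=
  letI : Algebra (ZMod (ringChar F)) F := ZMod.algebra _ _
  haveI : NeZero (ringChar F) := ⟨(CharP.char_is_prime F _).ne_zero⟩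
  (AddChar.zmodChar (ringChar F)
      ((Complex.isPrimitiveRoot_exp (ringChar F) (CharP.char_is_prime F _).ne_zero).pow_eq_one)).compAddMonoidHom
    ((Algebra.trace (ZMod (ringChar F)) F).toAddMonoidHom.comp (Matrix.traceAddMonoidHom (Fin n) F))

lemma psi_eq_psiChar {n : ℕ} (X : Matrix (Fin n) (Fin n) F) : psi F X = psiChar F X := by
  haveI : NeZero (ringChar F) := ⟨(CharP.char_is_prime F _).ne_zero⟩
  unfold psi psiChar
  rw [AddChar.compAddMonoidHom_apply, AddChar.zmodChar_apply, ← Complex.exp_nat_mul]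
  congr 1
  simp only [AddMonoidHom.comp_apply, LinearMap.toAddMonoidHom_coe, Matrix.traceAddMonoidHom_apply]
  ring

end Psi

section Psi2
variable (F : Type) [Field F] [Fintype F]

lemma abs_psiChar {n : ℕ} (X : Matrix (Fin n) (Fin n) F) :
    ‖psiChar F X‖ = 1 := by
  letI : Algebra (ZMod (ringChar F)) F := ZMod.algebra _ _
  rw [← psi_eq_psiChar]
  unfold psi
  rw [Complex.norm_exp]
  have : (2 * ↑Real.pi * Complex.I *
      ((((Algebra.trace (ZMod (ringChar F)) F) (Matrix.trace X)).val : ℂ) / ((ringChar F) : ℂ))).re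
      = 0 := by
    have h : ((((Algebra.trace (ZMod (ringChar F)) F) (Matrix.trace X)).val : ℂ) / ((ringChar F) : ℂ))
        = (((((Algebra.trace (ZMod (ringChar F)) F) (Matrix.trace X)).val : ℝ) / ((ringChar F) : ℝ) : ℝ) : ℂ) := by
      push_cast; ring
    rw [h]
    simp [Complex.mul_re, Complex.mul_im]
  rw [this, Real.exp_zero]

lemma psiChar_ne_zero {n : ℕ} (X : Matrix (Fin n) (Fin n) F) : psiChar F X ≠ 0 := by
  intro h
  have := abs_psiChar F X
  rw [h] at this; simp at this

lemma conj_psiChar {n : ℕ} (X : Matrix (Fin n) (Fin n) F) :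
    (starRingEnd ℂ) (psiChar F X) = psiChar F (-X) := by
  have h1 : psiChar F X * (starRingEnd ℂ) (psiChar F X) = 1 := by
    rw [Complex.mul_conj]
    rw [Complex.normSq_eq_norm_sq, abs_psiChar]
    norm_num
  have h2 : psiChar F X * psiChar F (-X) = 1 := by
    rw [← AddChar.map_add_eq_mul]
    simp
  exact mul_left_cancel₀ (psiChar_ne_zero F X) (h1.trans h2.symm)

lemma card_matrix (n : ℕ) : Fintype.card (Matrix (Fin n) (Fin n) F)
    = Fintype.card F ^ (n * n) := by
  have e : Matrix (Fin n) (Fin n) F ≃ (Fin n → Fin n → F) :=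
    (Matrix.of : (Fin n → Fin n → F) ≃ _).symm
  rw [Fintype.card_congr e]
  simp [Fintype.card_fun, pow_mul]

lemma sum_psiChar_mul {n : ℕ} [DecidableEq F] (M : Matrix (Fin n) (Fin n) F) :
    ∑ X : Matrix (Fin n) (Fin n) F, psiChar F (M * X)
      = if M = 0 then ((Fintype.card F : ℂ) ^ (n * n)) else 0 := by
  haveI : NeZero (ringChar F) := ⟨(CharP.char_is_prime F _).ne_zero⟩
  letI : Algebra (ZMod (ringChar F)) F := ZMod.algebra _ _
  split_ifs with h
  · subst h
    simp only [Matrix.zero_mul, AddChar.map_zero_eq_one]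
    rw [Finset.sum_const, Finset.card_univ, card_matrix, nsmul_eq_mul]
    push_cast; ring
  · obtain ⟨i, j, hij⟩ : ∃ i j, M i j ≠ 0 := by
      by_contra hc; push_neg at hc
      exact h (by ext i j; exact hc i j)
    obtain ⟨b, hb⟩ := FiniteField.trace_to_zmod_nondegenerate F hij
    have prim := AddChar.zmodChar_primitive_of_primitive_root (ringChar F)
      (Complex.isPrimitiveRoot_exp (ringChar F) (CharP.char_is_prime F _).ne_zero)
    set ψ := (psiChar F (n := n)).compAddMonoidHom (AddMonoidHom.mulLeft M) with hψ
    have hne : ψ ≠ 1 := by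
      rw [AddChar.ne_one_iff]
      refine ⟨Matrix.single j i b, ?_⟩
      have htr : (M * Matrix.single j i b).trace = M i j * b := by
        rw [Matrix.trace]
        rw [Finset.sum_eq_single i]
        · simp [Matrix.diag]
        · intro a _ ha
          simp [Matrix.diag, Matrix.mul_single_apply_of_ne _ _ _ _ _ ha]
        · intro hi; exact absurd (Finset.mem_univ i) hi
      show psiChar F (M * Matrix.single j i b) ≠ 1
      unfold psiChar
      rw [AddChar.compAddMonoidHom_apply]
      have prim' : (AddChar.zmodChar (ringChar F)
          ((Complex.isPrimitiveRoot_exp (ringChar F)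
            (CharP.char_is_prime F _).ne_zero).pow_eq_one)).IsPrimitive := prim
      intro hone
      apply hb
      have h0 := (prim'.zmod_char_eq_one_iff (ringChar F) _).mp hone
      rw [← htr]
      simpa using h0
    have := AddChar.sum_eq_zero_of_ne_one hne
    simpa [hψ] using this

end Psi2

section Anticomm
variable {F : Type} [Field F] [Fintype F] [DecidableEq F]

lemma entry_eq {A H : Matrix (Fin 2) (Fin 2) F} (h : A * H + H * A = 0) (i j : Fin 2) :
    A i 0 * H 0 j + A i 1 * H 1 j + (H i 0 * A 0 j + H i 1 * A 1 j) = 0 := by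
  have := congrFun (congrFun h i) j
  simpa [Matrix.mul_apply, Fin.sum_univ_two] using this

lemma card_anticomm_le_of_trace_ne (h2 : (2:F) ≠ 0) (A : Matrix (Fin 2) (Fin 2) F)
    (ht : A.trace ≠ 0) :
    (Finset.univ.filter (fun H : Matrix (Fin 2) (Fin 2) F => A * H + H * A = 0)).card
      ≤ Fintype.card F := by
  classical
  rw [Matrix.trace_fin_two] at ht
  set S := Finset.univ.filter (fun H : Matrix (Fin 2) (Fin 2) F => A * H + H * A = 0) with hS
  have memS : ∀ H ∈ S, A * H + H * A = 0 := fun H hH => (Finset.mem_filter.mp hH).2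
  -- derived facts
  have hy : ∀ H ∈ S, (A 0 0 + A 1 1) * H 0 1 = -(A 0 1) * (H 0 0 + H 1 1) := by
    intro H hH; linear_combination entry_eq (memS H hH) 0 1
  have hz : ∀ H ∈ S, (A 0 0 + A 1 1) * H 1 0 = -(A 1 0) * (H 0 0 + H 1 1) := by
    intro H hH; linear_combination entry_eq (memS H hH) 1 0
  have hx : ∀ H ∈ S, (A 0 0 + A 1 1) * A 0 0 * H 0 0 = A 0 1 * A 1 0 * (H 0 0 + H 1 1) := by
    intro H hH
    apply mul_left_cancel₀ h2
    linear_combination (A 0 0 + A 1 1) * entry_eq (memS H hH) 0 0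
      - A 1 0 * hy H hH - A 0 1 * hz H hH
  have hw : ∀ H ∈ S, (A 0 0 + A 1 1) * A 1 1 * H 1 1 = A 0 1 * A 1 0 * (H 0 0 + H 1 1) := by
    intro H hH
    apply mul_left_cancel₀ h2
    linear_combination (A 0 0 + A 1 1) * entry_eq (memS H hH) 1 1
      - A 1 0 * hy H hH - A 0 1 * hz H hH
  have key : ∀ H ∈ S, ∀ H' ∈ S, H 0 0 = H' 0 0 → H 1 1 = H' 1 1 → H = H' := by
    intro H hH H' hH' e00 e11
    have ey : H 0 1 = H' 0 1 := by
      apply mul_left_cancel₀ ht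
      rw [hy H hH, hy H' hH', e00, e11]
    have ez : H 1 0 = H' 1 0 := by
      apply mul_left_cancel₀ ht
      rw [hz H hH, hz H' hH', e00, e11]
    ext i j
    fin_cases i <;> fin_cases j <;> assumption
  have hx0 : ∀ H ∈ S, A 0 1 * A 1 0 = 0 → A 0 0 * H 0 0 = 0 := by
    intro H hH hbc
    have h' := hx H hH; rw [hbc, zero_mul, mul_assoc] at h'
    exact (mul_eq_zero.mp h').resolve_left ht
  have hw0 : ∀ H ∈ S, A 0 1 * A 1 0 = 0 → A 1 1 * H 1 1 = 0 := by
    intro H hH hbc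
    have h' := hw H hH; rw [hbc, zero_mul, mul_assoc] at h'
    exact (mul_eq_zero.mp h').resolve_left ht
  by_cases hbc : A 0 1 * A 1 0 = 0
  · by_cases ha : A 0 0 = 0
    · have hd : A 1 1 ≠ 0 := fun h => ht (by rw [ha, h, add_zero])
      have := Finset.card_le_card_of_injOn (s := S) (t := (Finset.univ : Finset F))
        (fun H => H 0 0) (fun _ _ => Finset.mem_univ _) ?_
      · simpa using this
      · intro H hH H' hH' e
        have w1 : H 1 1 = 0 := (mul_eq_zero.mp (hw0 H hH hbc)).resolve_left hd
        have w2 : H' 1 1 = 0 := (mul_eq_zero.mp (hw0 H' hH' hbc)).resolve_left hd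
        exact key H hH H' hH' e (w1.trans w2.symm)
    · by_cases hd : A 1 1 = 0
      · have := Finset.card_le_card_of_injOn (s := S) (t := (Finset.univ : Finset F))
          (fun H => H 1 1) (fun _ _ => Finset.mem_univ _) ?_
        · simpa using this
        · intro H hH H' hH' e
          have w1 : H 0 0 = 0 := (mul_eq_zero.mp (hx0 H hH hbc)).resolve_left ha
          have w2 : H' 0 0 = 0 := (mul_eq_zero.mp (hx0 H' hH' hbc)).resolve_left ha
          exact key H hH H' hH' (w1.trans w2.symm) e
      · refine le_trans ?_ Fintype.card_pos
        apply Finset.card_le_one.mpr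
        intro H hH H' hH'
        have w1 : H 0 0 = 0 := (mul_eq_zero.mp (hx0 H hH hbc)).resolve_left ha
        have w2 : H' 0 0 = 0 := (mul_eq_zero.mp (hx0 H' hH' hbc)).resolve_left ha
        have v1 : H 1 1 = 0 := (mul_eq_zero.mp (hw0 H hH hbc)).resolve_left hd
        have v2 : H' 1 1 = 0 := (mul_eq_zero.mp (hw0 H' hH' hbc)).resolve_left hd
        exact key H hH H' hH' (w1.trans w2.symm) (v1.trans v2.symm)
  · have := Finset.card_le_card_of_injOn (s := S) (t := (Finset.univ : Finset F))
      (fun H => H 0 0) (fun _ _ => Finset.mem_univ _) ?_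
    · simpa using this
    · intro H hH H' hH' e
      simp only at e
      have sum_eq : H 0 0 + H 1 1 = H' 0 0 + H' 1 1 := by
        apply mul_left_cancel₀ hbc
        rw [← hx H hH, ← hx H' hH', e]
      have e11 : H 1 1 = H' 1 1 := by
        rw [e] at sum_eq; exact add_left_cancel sum_eq
      exact key H hH H' hH' e e11

lemma card_anticomm_le (h2 : (2:F) ≠ 0) (A : Matrix (Fin 2) (Fin 2) F) (hA : A ≠ 0) :
    (Finset.univ.filter (fun H : Matrix (Fin 2) (Fin 2) F => A * H + H * A = 0)).card
      ≤ Fintype.card F ^ 2 := by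
  classical
  by_cases ht : A.trace = 0
  swap
  · exact le_trans (card_anticomm_le_of_trace_ne h2 A ht) (Nat.le_self_pow two_ne_zero _)
  rw [Matrix.trace_fin_two] at ht
  set S := Finset.univ.filter (fun H : Matrix (Fin 2) (Fin 2) F => A * H + H * A = 0) with hS
  have memS : ∀ H ∈ S, A * H + H * A = 0 := fun H hH => (Finset.mem_filter.mp hH).2
  have hb : ∀ H ∈ S, A 0 1 * (H 0 0 + H 1 1) = 0 := by
    intro H hH; linear_combination entry_eq (memS H hH) 0 1 - H 0 1 * ht
  have hc : ∀ H ∈ S, A 1 0 * (H 0 0 + H 1 1) = 0 := by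
    intro H hH; linear_combination entry_eq (memS H hH) 1 0 - H 1 0 * ht
  have ha' : ∀ H ∈ S, A 0 0 * (H 0 0 + H 1 1) = 0 := by
    intro H hH
    apply mul_left_cancel₀ h2
    linear_combination entry_eq (memS H hH) 0 0 - entry_eq (memS H hH) 1 1
      + 2 * H 1 1 * ht
  have cardFF : (Finset.univ : Finset (F × F)).card = Fintype.card F ^ 2 := by
    simp [Fintype.card_prod, sq]
  by_cases hb0 : A 0 1 = 0
  · by_cases hc0 : A 1 0 = 0
    · by_cases ha0 : A 0 0 = 0
      · have hd0 : A 1 1 = 0 := by linear_combination ht - ha0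
        exact absurd (by ext i j; fin_cases i <;> fin_cases j <;>
          simp only [Matrix.zero_apply] <;>
          first
            | exact ha0
            | exact hb0
            | exact hc0
            | exact hd0) hA
      · have x0 : ∀ H ∈ S, H 0 0 = 0 := by
          intro H hH
          have h' : 2 * (A 0 0 * H 0 0) = 2 * 0 := by
            linear_combination entry_eq (memS H hH) 0 0 - H 1 0 * hb0 - H 0 1 * hc0
          exact (mul_eq_zero.mp (mul_left_cancel₀ h2 h')).resolve_left ha0
        have w0 : ∀ H ∈ S, H 1 1 = 0 := by
          intro H hH
          have s0 := (mul_eq_zero.mp (ha' H hH)).resolve_left ha0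
          rw [x0 H hH, zero_add] at s0; exact s0
        have := Finset.card_le_card_of_injOn (s := S) (t := (Finset.univ : Finset (F × F)))
          (fun H => (H 0 1, H 1 0)) (fun _ _ => Finset.mem_univ _) ?_
        · rw [cardFF] at this; exact this
        · intro H hH H' hH' e
          simp only [Prod.mk.injEq] at e
          ext i j
          fin_cases i <;> fin_cases j <;>
            first
              | exact e.1
              | exact e.2
              | exact (x0 H hH).trans (x0 H' hH').symm
              | exact (w0 H hH).trans (w0 H' hH').symm
    · -- A 1 0 ≠ 0
      have := Finset.card_le_card_of_injOn (s := S) (t := (Finset.univ : Finset (F × F)))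
        (fun H => (H 0 0, H 1 0)) (fun _ _ => Finset.mem_univ _) ?_
      · rw [cardFF] at this; exact this
      · intro H hH H' hH' e
        simp only [Prod.mk.injEq] at e
        have w1 : ∀ K ∈ S, K 1 1 = -(K 0 0) := by
          intro K hK
          have s0 := (mul_eq_zero.mp (hc K hK)).resolve_left hc0
          linear_combination s0
        have ew : H 1 1 = H' 1 1 := by
          rw [w1 H hH, w1 H' hH', e.1]
        have ey : H 0 1 = H' 0 1 := by
          apply mul_left_cancel₀ hc0
          linear_combination entry_eq (memS H hH) 0 0 - entry_eq (memS H' hH') 0 0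
            - 2 * A 0 0 * e.1 - A 0 1 * e.2
        ext i j
        fin_cases i <;> fin_cases j <;>
          first
            | exact e.1
            | exact e.2
            | exact ey
            | exact ew
  · -- A 0 1 ≠ 0
    have := Finset.card_le_card_of_injOn (s := S) (t := (Finset.univ : Finset (F × F)))
      (fun H => (H 0 0, H 0 1)) (fun _ _ => Finset.mem_univ _) ?_
    · rw [cardFF] at this; exact this
    · intro H hH H' hH' e
      simp only [Prod.mk.injEq] at e
      have w1 : ∀ K ∈ S, K 1 1 = -(K 0 0) := by
        intro K hK
        have s0 := (mul_eq_zero.mp (hb K hK)).resolve_left hb0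
        linear_combination s0
      have ew : H 1 1 = H' 1 1 := by
        rw [w1 H hH, w1 H' hH', e.1]
      have ez : H 1 0 = H' 1 0 := by
        apply mul_left_cancel₀ hb0
        linear_combination entry_eq (memS H hH) 0 0 - entry_eq (memS H' hH') 0 0
          - 2 * A 0 0 * e.1 - A 1 0 * e.2
      ext i j
      fin_cases i <;> fin_cases j <;>
        first
          | exact e.1
          | exact e.2
          | exact ez
          | exact ew

end Anticomm

section Gauss
variable (F : Type) [Field F] [Fintype F] [DecidableEq F]

lemma psiChar_congr {n : ℕ} {X Y : Matrix (Fin n) (Fin n) F} (h : X.trace = Y.trace) :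
    psiChar F X = psiChar F Y := by
  unfold psiChar
  simp only [AddChar.compAddMonoidHom_apply, AddMonoidHom.comp_apply,
    LinearMap.toAddMonoidHom_coe, Matrix.traceAddMonoidHom_apply]
  rw [h]

lemma psiChar_map_sum {n : ℕ} {ι : Type} (s : Finset ι) (f : ι → Matrix (Fin n) (Fin n) F) :
    psiChar F (∑ i ∈ s, f i) = ∏ i ∈ s, psiChar F (f i) := by
  classical
  induction s using Finset.induction_on with
  | empty => simp
  | insert a s h ih => rw [Finset.sum_insert h, Finset.prod_insert h, AddChar.map_add_eq_mul, ih]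

lemma gauss_bound (A : Matrix (Fin 2) (Fin 2) F) :
    ‖∑ X : Matrix (Fin 2) (Fin 2) F, psiChar F (A * X ^ 2)‖ ^ 2
      ≤ (Fintype.card F : ℝ) ^ 4 *
        ((Finset.univ.filter
          (fun H : Matrix (Fin 2) (Fin 2) F => A * H + H * A = 0)).card : ℝ) := by
  classical
  set g := ∑ X : Matrix (Fin 2) (Fin 2) F, psiChar F (A * X ^ 2) with hg
  have key : g * (starRingEnd ℂ) g
      = (Fintype.card F : ℂ) ^ (2 * 2) *
        ∑ H ∈ Finset.univ.filter (fun H : Matrix (Fin 2) (Fin 2) F => A * H + H * A = 0),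
          psiChar F (A * H ^ 2) := by
    have hconj : (starRingEnd ℂ) g = ∑ Y : Matrix (Fin 2) (Fin 2) F, psiChar F (-(A * Y ^ 2)) := by
      rw [hg, map_sum]; exact Finset.sum_congr rfl fun Y _ => conj_psiChar F _
    rw [hconj, hg, Finset.sum_mul_sum]
    calc ∑ X : Matrix (Fin 2) (Fin 2) F, ∑ Y : Matrix (Fin 2) (Fin 2) F, psiChar F (A * X ^ 2) * psiChar F (-(A * Y ^ 2))
        = ∑ Y : Matrix (Fin 2) (Fin 2) F, ∑ X : Matrix (Fin 2) (Fin 2) F, psiChar F (A * X ^ 2) * psiChar F (-(A * Y ^ 2)) :=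
          Finset.sum_comm
      _ = ∑ Y : Matrix (Fin 2) (Fin 2) F, ∑ H : Matrix (Fin 2) (Fin 2) F, psiChar F (A * H ^ 2) * psiChar F ((A * H + H * A) * Y) := by
          refine Finset.sum_congr rfl fun Y _ => ?_
          rw [← Equiv.sum_comp (Equiv.addLeft Y)
            (fun X => psiChar F (A * X ^ 2) * psiChar F (-(A * Y ^ 2)))]
          refine Finset.sum_congr rfl fun H _ => ?_
          show psiChar F (A * (Y + H) ^ 2) * psiChar F (-(A * Y ^ 2)) = _
          rw [← AddChar.map_add_eq_mul, ← AddChar.map_add_eq_mul]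
          apply psiChar_congr
          have expand : A * (Y + H) ^ 2 + -(A * Y ^ 2)
              = A * H ^ 2 + (A * (Y * H) + A * (H * Y)) := by noncomm_ring
          rw [expand, Matrix.trace_add, Matrix.trace_add, Matrix.trace_add]
          congr 1
          calc (A * (Y * H)).trace + (A * (H * Y)).trace
              = (H * A * Y).trace + (A * H * Y).trace := by
                rw [← mul_assoc, Matrix.trace_mul_cycle A Y H, ← mul_assoc]
            _ = ((A * H + H * A) * Y).trace := by
                rw [Matrix.add_mul, Matrix.trace_add, add_comm]
      _ = ∑ H : Matrix (Fin 2) (Fin 2) F, psiChar F (A * H ^ 2) * ∑ Y : Matrix (Fin 2) (Fin 2) F, psiChar F ((A * H + H * A) * Y) := by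
          rw [Finset.sum_comm]
          exact Finset.sum_congr rfl fun H _ => (Finset.mul_sum _ _ _).symm
      _ = ∑ H : Matrix (Fin 2) (Fin 2) F, (if A * H + H * A = 0
            then psiChar F (A * H ^ 2) * (Fintype.card F : ℂ) ^ (2 * 2) else 0) := by
          refine Finset.sum_congr rfl fun H _ => ?_
          rw [sum_psiChar_mul, mul_ite, mul_zero]
      _ = ∑ H ∈ Finset.univ.filter (fun H : Matrix (Fin 2) (Fin 2) F => A * H + H * A = 0),
            psiChar F (A * H ^ 2) * (Fintype.card F : ℂ) ^ (2 * 2) :=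
          (Finset.sum_filter _ _).symm
      _ = _ := by rw [← Finset.sum_mul, mul_comm]
  have habs : ‖g‖ ^ 2 = ‖g * (starRingEnd ℂ) g‖ := by
    rw [norm_mul, Complex.norm_conj, sq]
  rw [habs, key, norm_mul, norm_pow, Complex.norm_natCast]
  have : ‖∑ H ∈ Finset.univ.filter (fun H : Matrix (Fin 2) (Fin 2) F => A * H + H * A = 0),
      psiChar F (A * H ^ 2)‖
      ≤ ((Finset.univ.filter (fun H : Matrix (Fin 2) (Fin 2) F => A * H + H * A = 0)).card : ℝ) := by
    refine le_trans (norm_sum_le _ _) ?_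
    rw [Finset.sum_congr rfl (fun H _ => abs_psiChar F (A * H ^ 2)), Finset.sum_const,
      nsmul_eq_mul, mul_one]
  calc (Fintype.card F : ℝ) ^ (2 * 2) * ‖∑ H ∈ Finset.univ.filter
        (fun H : Matrix (Fin 2) (Fin 2) F => A * H + H * A = 0), psiChar F (A * H ^ 2)‖
      ≤ (Fintype.card F : ℝ) ^ (2 * 2) *
        ((Finset.univ.filter (fun H : Matrix (Fin 2) (Fin 2) F => A * H + H * A = 0)).card : ℝ) := by
        exact mul_le_mul_of_nonneg_left this (by positivity)
    _ = _ := by norm_num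

end Gauss

section Count
variable (F : Type) [Field F] [Fintype F] [DecidableEq F]

lemma sphere_card (r : ℕ) (T : Matrix (Fin 2) (Fin 2) F) :
    ((matSphere F r T).card : ℂ) * (Fintype.card F : ℂ) ^ 4
      = ∑ A : Matrix (Fin 2) (Fin 2) F, psiChar F (-(A * T)) *
          (∑ X : Matrix (Fin 2) (Fin 2) F, psiChar F (A * X ^ 2)) ^ r := by
  classical
  have hpow : ∀ A : Matrix (Fin 2) (Fin 2) F,
      (∑ X : Matrix (Fin 2) (Fin 2) F, psiChar F (A * X ^ 2)) ^ r
        = ∑ X : Fin r → Matrix (Fin 2) (Fin 2) F, ∏ i, psiChar F (A * (X i) ^ 2) := by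
    intro A
    calc (∑ X : Matrix (Fin 2) (Fin 2) F, psiChar F (A * X ^ 2)) ^ r
        = ∏ _i : Fin r, ∑ X : Matrix (Fin 2) (Fin 2) F, psiChar F (A * X ^ 2) := by
          rw [Finset.prod_const, Finset.card_univ, Fintype.card_fin]
      _ = ∑ p ∈ Fintype.piFinset (fun _ : Fin r => (Finset.univ : Finset (Matrix (Fin 2) (Fin 2) F))),
            ∏ i, psiChar F (A * (p i) ^ 2) := Finset.prod_univ_sum _ _
      _ = _ := by rw [Fintype.piFinset_univ]
  symm
  calc ∑ A : Matrix (Fin 2) (Fin 2) F, psiChar F (-(A * T)) *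
          (∑ X : Matrix (Fin 2) (Fin 2) F, psiChar F (A * X ^ 2)) ^ r
      = ∑ A : Matrix (Fin 2) (Fin 2) F, ∑ X : Fin r → Matrix (Fin 2) (Fin 2) F,
          psiChar F (((∑ i, (X i) ^ 2) - T) * A) := by
        refine Finset.sum_congr rfl fun A _ => ?_
        rw [hpow A, Finset.mul_sum]
        refine Finset.sum_congr rfl fun X _ => ?_
        rw [← psiChar_map_sum, ← AddChar.map_add_eq_mul]
        apply psiChar_congr
        have hm : -(A * T) + ∑ i, A * (X i) ^ 2 = A * ((∑ i, (X i) ^ 2) - T) := by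
          rw [← Finset.mul_sum]; noncomm_ring
        rw [hm]
        exact Matrix.trace_mul_comm A _
    _ = ∑ X : Fin r → Matrix (Fin 2) (Fin 2) F,
          (if ((∑ i, (X i) ^ 2) - T) = 0 then (Fintype.card F : ℂ) ^ (2 * 2) else 0) := by
        rw [Finset.sum_comm]
        exact Finset.sum_congr rfl fun X _ => sum_psiChar_mul F _
    _ = ∑ X : Fin r → Matrix (Fin 2) (Fin 2) F,
          (if (∑ i, (X i) ^ 2) = T then (Fintype.card F : ℂ) ^ 4 else 0) := by
        refine Finset.sum_congr rfl fun X _ => ?_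
        exact if_congr sub_eq_zero (by norm_num) rfl
    _ = ∑ X ∈ matSphere F r T, (Fintype.card F : ℂ) ^ 4 := by
        rw [matSphere, Finset.sum_filter]
    _ = ((matSphere F r T).card : ℂ) * (Fintype.card F : ℂ) ^ 4 := by
        rw [Finset.sum_const, nsmul_eq_mul]

end Count

lemma le_of_sq_le_sq'' {a b : ℝ} (ha : 0 ≤ a) (hb : 0 ≤ b) (h : a ^ 2 ≤ b ^ 2) : a ≤ b := by
  nlinarith

lemma card_traceless_le (F : Type) [Field F] [Fintype F] [DecidableEq F] :
    (Finset.univ.filter (fun A : Matrix (Fin 2) (Fin 2) F => A.trace = 0)).card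
      ≤ Fintype.card F ^ 3 := by
  classical
  have hcard : (Finset.univ : Finset (F × F × F)).card = Fintype.card F ^ 3 := by
    simp [Fintype.card_prod]; ring
  have := Finset.card_le_card_of_injOn
    (s := Finset.univ.filter (fun A : Matrix (Fin 2) (Fin 2) F => A.trace = 0))
    (t := (Finset.univ : Finset (F × F × F)))
    (fun A => (A 0 0, A 0 1, A 1 0)) (fun _ _ => Finset.mem_univ _) ?_
  · rwa [hcard] at this
  · intro A hA A' hA' e
    simp only [Prod.mk.injEq] at e
    have t1 : A 1 1 = -(A 0 0) := by
      have := (Finset.mem_filter.mp hA).2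
      rw [Matrix.trace_fin_two] at this
      linear_combination this
    have t2 : A' 1 1 = -(A' 0 0) := by
      have := (Finset.mem_filter.mp hA').2
      rw [Matrix.trace_fin_two] at this
      linear_combination this
    ext i j
    fin_cases i <;> fin_cases j <;>
      first
        | exact e.1
        | exact e.2.1
        | exact e.2.2
        | exact (by rw [t1, t2, e.1] : A 1 1 = A' 1 1)


/-- Proposition 4.1, size part: for `r ≥ 4`, `|#σ_T - q^{4(r-1)}| ≤ c q^{3r-1}`
uniformly over odd `q` and `T ∈ M_2(F_q)`. -/
theorem matSphere_card_rank_two (r : ℕ) (hr : 4 ≤ r) :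
    ∃ c : ℝ, 0 < c ∧
      ∀ (F : Type) [Field F] [Fintype F] [DecidableEq F],
        Odd (Fintype.card F) →
        ∀ T : Matrix (Fin 2) (Fin 2) F,
          |((matSphere F r T).card : ℝ) - (Fintype.card F : ℝ) ^ (4 * (r - 1))| ≤
            c * (Fintype.card F : ℝ) ^ (3 * r - 1) := by
  refine ⟨2, by norm_num, ?_⟩
  intro F _ _ _ hodd T
  classical
  have hp : (ringChar F).Prime := CharP.char_is_prime F _
  have h2 : (2 : F) ≠ 0 := by
    intro h
    have hd : ringChar F ∣ 2 := (CharP.cast_eq_zero_iff F (ringChar F) 2).mp (by exact_mod_cast h)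
    have hc2 : ringChar F = 2 := (Nat.prime_dvd_prime_iff_eq hp Nat.prime_two).mp hd
    have he := FiniteField.even_card_of_char_two hc2
    have ho := Nat.odd_iff.mp hodd
    omega
  set q : ℝ := (Fintype.card F : ℝ) with hqdef
  have hq1 : (1 : ℝ) ≤ q := by
    have h1 : 1 ≤ Fintype.card F := Fintype.card_pos
    rw [hqdef]
    exact_mod_cast h1
  have hq0 : (0 : ℝ) < q := lt_of_lt_of_le zero_lt_one hq1
  set g : Matrix (Fin 2) (Fin 2) F → ℂ :=
    fun A => ∑ X : Matrix (Fin 2) (Fin 2) F, psiChar F (A * X ^ 2) with hgdef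
  set N := (matSphere F r T).card with hN
  have split : (N : ℂ) * (Fintype.card F : ℂ) ^ 4 - ((Fintype.card F : ℂ) ^ 4) ^ r
      = ∑ A ∈ Finset.univ.erase (0 : Matrix (Fin 2) (Fin 2) F),
          psiChar F (-(A * T)) * (g A) ^ r := by
    rw [hN, sphere_card F r T,
      ← Finset.add_sum_erase _ _ (Finset.mem_univ (0 : Matrix (Fin 2) (Fin 2) F))]
    have hg0 : g 0 = (Fintype.card F : ℂ) ^ 4 := by
      show (∑ X : Matrix (Fin 2) (Fin 2) F, psiChar F ((0 : Matrix (Fin 2) (Fin 2) F) * X ^ 2)) = _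
      simp only [Matrix.zero_mul, AddChar.map_zero_eq_one]
      rw [Finset.sum_const, Finset.card_univ, card_matrix, nsmul_eq_mul, mul_one]
      push_cast; norm_num
    have h0 : psiChar F (-((0 : Matrix (Fin 2) (Fin 2) F) * T)) *
        (g 0) ^ r = ((Fintype.card F : ℂ) ^ 4) ^ r := by
      rw [hg0]
      simp
    rw [h0]; ring
  -- pointwise bounds
  have boundA : ∀ A : Matrix (Fin 2) (Fin 2) F, A ≠ 0 → A.trace = 0 →
      ‖g A‖ ^ r ≤ q ^ (3 * r) := by
    intro A hA ht
    have h1 := gauss_bound F A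
    have hcard := card_anticomm_le h2 A hA
    have hsq : ‖g A‖ ^ 2 ≤ q ^ 6 := by
      refine le_trans h1 ?_
      calc q ^ 4 * (((Finset.univ.filter
            (fun H : Matrix (Fin 2) (Fin 2) F => A * H + H * A = 0)).card : ℝ))
          ≤ q ^ 4 * (q ^ 2) := by
            refine mul_le_mul_of_nonneg_left ?_ (by positivity)
            rw [hqdef]
            exact_mod_cast hcard
        _ = q ^ 6 := by ring
    have h3 : ‖g A‖ ≤ q ^ 3 := by
      refine le_of_sq_le_sq'' (norm_nonneg _) (by positivity) ?_
      rw [show ((q : ℝ) ^ 3) ^ 2 = q ^ 6 by ring]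
      exact hsq
    calc ‖g A‖ ^ r ≤ (q ^ 3) ^ r := pow_le_pow_left₀ (norm_nonneg _) h3 r
      _ = q ^ (3 * r) := by rw [← pow_mul]
  have boundB : ∀ A : Matrix (Fin 2) (Fin 2) F, A.trace ≠ 0 →
      ‖g A‖ ^ r ≤ q ^ (3 * r - 2) := by
    intro A ht
    have h1 := gauss_bound F A
    have hcard := card_anticomm_le_of_trace_ne h2 A ht
    have hsq : ‖g A‖ ^ 2 ≤ q ^ 5 := by
      refine le_trans h1 ?_
      calc q ^ 4 * (((Finset.univ.filter
            (fun H : Matrix (Fin 2) (Fin 2) F => A * H + H * A = 0)).card : ℝ))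
          ≤ q ^ 4 * (q ^ 1) := by
            refine mul_le_mul_of_nonneg_left ?_ (by positivity)
            rw [hqdef, pow_one]
            exact_mod_cast hcard
        _ = q ^ 5 := by ring
    refine le_of_sq_le_sq'' (by positivity) (by positivity) ?_
    calc (‖g A‖ ^ r) ^ 2 = (‖g A‖ ^ 2) ^ r := by
          rw [← pow_mul, mul_comm, pow_mul]
      _ ≤ (q ^ 5) ^ r := pow_le_pow_left₀ (sq_nonneg _) hsq r
      _ = q ^ (5 * r) := by rw [← pow_mul]
      _ ≤ q ^ ((3 * r - 2) * 2) := pow_le_pow_right₀ hq1 (by omega)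
      _ = (q ^ (3 * r - 2)) ^ 2 := by rw [pow_mul]
  -- sum bound
  have sum_bound : ‖∑ A ∈ Finset.univ.erase (0 : Matrix (Fin 2) (Fin 2) F),
      psiChar F (-(A * T)) * (g A) ^ r‖ ≤ q ^ (3 * r + 3) + q ^ (3 * r + 2) := by
    refine le_trans (norm_sum_le _ _) ?_
    have hterm : ∀ A : Matrix (Fin 2) (Fin 2) F,
        ‖psiChar F (-(A * T)) * (g A) ^ r‖ = ‖g A‖ ^ r := by
      intro A
      rw [norm_mul, abs_psiChar, one_mul, norm_pow]
    rw [Finset.sum_congr rfl fun A _ => hterm A]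
    rw [← Finset.sum_filter_add_sum_filter_not
      (Finset.univ.erase (0 : Matrix (Fin 2) (Fin 2) F)) (fun A => A.trace = 0)]
    have b1 : ∑ A ∈ (Finset.univ.erase (0 : Matrix (Fin 2) (Fin 2) F)).filter
        (fun A => A.trace = 0), ‖g A‖ ^ r ≤ q ^ (3 * r + 3) := by
      refine le_trans (Finset.sum_le_card_nsmul _ _ (q ^ (3 * r)) ?_) ?_
      · intro A hA
        have hA' := Finset.mem_filter.mp hA
        exact boundA A (Finset.ne_of_mem_erase hA'.1) hA'.2
      · rw [nsmul_eq_mul]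
        have hcard : (((Finset.univ.erase (0 : Matrix (Fin 2) (Fin 2) F)).filter
            (fun A => A.trace = 0)).card : ℝ) ≤ q ^ 3 := by
          rw [hqdef]
          have hle : ((Finset.univ.erase (0 : Matrix (Fin 2) (Fin 2) F)).filter
              (fun A => A.trace = 0)).card
              ≤ (Finset.univ.filter (fun A : Matrix (Fin 2) (Fin 2) F => A.trace = 0)).card :=
            Finset.card_le_card (Finset.filter_subset_filter _ (Finset.erase_subset _ _))
          exact_mod_cast le_trans hle (card_traceless_le F)
        calc (((Finset.univ.erase (0 : Matrix (Fin 2) (Fin 2) F)).filter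
              (fun A => A.trace = 0)).card : ℝ) * q ^ (3 * r)
            ≤ q ^ 3 * q ^ (3 * r) := by
              exact mul_le_mul_of_nonneg_right hcard (by positivity)
          _ = q ^ (3 * r + 3) := by rw [← pow_add]; ring_nf
    have b2 : ∑ A ∈ (Finset.univ.erase (0 : Matrix (Fin 2) (Fin 2) F)).filter
        (fun A => ¬ A.trace = 0), ‖g A‖ ^ r ≤ q ^ (3 * r + 2) := by
      refine le_trans (Finset.sum_le_card_nsmul _ _ (q ^ (3 * r - 2)) ?_) ?_
      · intro A hA
        exact boundB A (Finset.mem_filter.mp hA).2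
      · rw [nsmul_eq_mul]
        have hcard : ((((Finset.univ.erase (0 : Matrix (Fin 2) (Fin 2) F)).filter
            (fun A => ¬ A.trace = 0)).card : ℝ)) ≤ q ^ 4 := by
          rw [hqdef]
          have hle : (((Finset.univ.erase (0 : Matrix (Fin 2) (Fin 2) F)).filter
              (fun A => ¬ A.trace = 0)).card) ≤ Fintype.card (Matrix (Fin 2) (Fin 2) F) :=
            Finset.card_le_univ _
          rw [card_matrix] at hle
          exact_mod_cast le_trans hle (by norm_num)
        calc ((((Finset.univ.erase (0 : Matrix (Fin 2) (Fin 2) F)).filter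
              (fun A => ¬ A.trace = 0)).card : ℝ)) * q ^ (3 * r - 2)
            ≤ q ^ 4 * q ^ (3 * r - 2) := by
              exact mul_le_mul_of_nonneg_right hcard (by positivity)
          _ = q ^ (3 * r + 2) := by rw [← pow_add]; congr 1; omega
    exact add_le_add b1 b2
  -- conclude
  have habs_eq : ‖(N : ℂ) * (Fintype.card F : ℂ) ^ 4
      - ((Fintype.card F : ℂ) ^ 4) ^ r‖
      = |(N : ℝ) - q ^ (4 * (r - 1))| * q ^ 4 := by
    have hc : ((N : ℂ) * (Fintype.card F : ℂ) ^ 4 - ((Fintype.card F : ℂ) ^ 4) ^ r)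
        = ((((N : ℝ) - q ^ (4 * (r - 1))) * q ^ 4 : ℝ) : ℂ) := by
      rw [show ((Fintype.card F : ℂ) ^ 4) ^ r
          = (Fintype.card F : ℂ) ^ (4 * (r - 1)) * (Fintype.card F : ℂ) ^ 4 by
        rw [← pow_mul, ← pow_add]; congr 1; omega]
      push_cast [hqdef]
      ring
    rw [hc, Complex.norm_real, Real.norm_eq_abs, abs_mul, abs_of_nonneg (by positivity : (0:ℝ) ≤ q ^ 4)]
  have main : |(N : ℝ) - q ^ (4 * (r - 1))| * q ^ 4 ≤ q ^ (3 * r + 3) + q ^ (3 * r + 2) := by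
    rw [← habs_eq, split]
    exact sum_bound
  refine le_of_mul_le_mul_right ?_ (by positivity : (0:ℝ) < q ^ 4)
  calc |(N : ℝ) - q ^ (4 * (r - 1))| * q ^ 4
      ≤ q ^ (3 * r + 3) + q ^ (3 * r + 2) := main
    _ ≤ q ^ (3 * r + 3) + q ^ (3 * r + 3) := by
        refine add_le_add_right (pow_le_pow_right₀ hq1 (by omega)) _
    _ = 2 * q ^ (3 * r - 1) * q ^ 4 := by
        rw [mul_assoc, ← pow_add]
        rw [show 3 * r - 1 + 4 = 3 * r + 3 by omega]
        ring
end

section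
/- For every integer k ≥ 1 and all nonnegative real numbers e_1,…,e_k, one has k·(Σ_{i=1}^k i·e_i² + 2·Σ_{1 ≤ i < j ≤ k} i·e_i·e_j) ≤ (Σ_{i=1}^k i·e_i)² + (k−1)·(Σ_{i=1}^{k−1} i·e_i)². -/
open scoped BigOperators

private lemma sq_sum_eq (s : Finset ℕ) (e : ℕ → ℝ) :
    (∑ i ∈ s, (i : ℝ) * e i) ^ 2 = ∑ i ∈ s, ∑ j ∈ s, ((i : ℝ) * j) * (e i * e j) := by
  rw [sq, Finset.sum_mul_sum]
  refine Finset.sum_congr rfl fun i _ => Finset.sum_congr rfl fun j _ => by ring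

private lemma min_double_sum (n : ℕ) (e : ℕ → ℝ) :
    ∑ i ∈ Finset.Icc 1 n, ∑ j ∈ Finset.Icc 1 n, ((min i j : ℕ) : ℝ) * (e i * e j)
      = ∑ i ∈ Finset.Icc 1 n, (i : ℝ) * e i ^ 2 +
        2 * ∑ i ∈ Finset.Icc 1 n, ∑ j ∈ Finset.Icc (i + 1) n, (i : ℝ) * e i * e j := by
  have hsplit : ∀ i ∈ Finset.Icc 1 n,
      ∑ j ∈ Finset.Icc 1 n, ((min i j : ℕ) : ℝ) * (e i * e j)
        = ∑ j ∈ Finset.Icc 1 i, (j : ℝ) * (e i * e j)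
          + ∑ j ∈ Finset.Icc (i + 1) n, (i : ℝ) * (e i * e j) := by
    intro i hi
    rw [Finset.mem_Icc] at hi
    have h := Finset.sum_Ioc_consecutive (fun j => ((min i j : ℕ) : ℝ) * (e i * e j))
      (Nat.zero_le i) hi.2
    rw [← Finset.Icc_add_one_left_eq_Ioc 0 i, ← Finset.Icc_add_one_left_eq_Ioc 0 n, ← Finset.Icc_add_one_left_eq_Ioc i n, zero_add] at h
    rw [← h]
    congr 1
    · refine Finset.sum_congr rfl fun j hj => ?_
      rw [Finset.mem_Icc] at hj
      simp only [min_eq_right hj.2]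
    · refine Finset.sum_congr rfl fun j hj => ?_
      rw [Finset.mem_Icc] at hj
      simp only [min_eq_left (show i ≤ j by omega)]
  rw [Finset.sum_congr rfl hsplit, Finset.sum_add_distrib]
  have hswap : ∑ i ∈ Finset.Icc 1 n, ∑ j ∈ Finset.Icc 1 i, (j : ℝ) * (e i * e j)
      = ∑ j ∈ Finset.Icc 1 n, ∑ i ∈ Finset.Icc j n, (j : ℝ) * (e i * e j) :=
    Finset.sum_comm' (by intro x y; simp only [Finset.mem_Icc]; omega)
  rw [hswap]
  have hdiag : ∀ j ∈ Finset.Icc 1 n,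
      ∑ i ∈ Finset.Icc j n, (j : ℝ) * (e i * e j)
        = (j : ℝ) * e j ^ 2 + ∑ i ∈ Finset.Icc (j + 1) n, (j : ℝ) * (e i * e j) := by
    intro j hj
    rw [Finset.mem_Icc] at hj
    rw [Finset.Icc_eq_cons_Ioc hj.2, Finset.sum_cons, ← Finset.Icc_add_one_left_eq_Ioc]
    congr 1
    ring
  rw [Finset.sum_congr rfl hdiag, Finset.sum_add_distrib]
  have h1 : ∑ j ∈ Finset.Icc 1 n, ∑ i ∈ Finset.Icc (j + 1) n, (j : ℝ) * (e i * e j)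
      = ∑ i ∈ Finset.Icc 1 n, ∑ j ∈ Finset.Icc (i + 1) n, (i : ℝ) * e i * e j := by
    refine Finset.sum_congr rfl fun i _ => Finset.sum_congr rfl fun j _ => by ring
  have h2 : ∑ i ∈ Finset.Icc 1 n, ∑ j ∈ Finset.Icc (i + 1) n, (i : ℝ) * (e i * e j)
      = ∑ i ∈ Finset.Icc 1 n, ∑ j ∈ Finset.Icc (i + 1) n, (i : ℝ) * e i * e j := by
    refine Finset.sum_congr rfl fun i _ => Finset.sum_congr rfl fun j _ => by ring
  rw [h1, h2]
  ring

private lemma split_top (m : ℕ) (f : ℕ → ℕ → ℝ) :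
    ∑ i ∈ Finset.Icc 1 (m + 1), ∑ j ∈ Finset.Icc 1 (m + 1), f i j
      = ∑ i ∈ Finset.Icc 1 m, ∑ j ∈ Finset.Icc 1 m, f i j
        + ∑ i ∈ Finset.Icc 1 m, f i (m + 1)
        + ∑ j ∈ Finset.Icc 1 m, f (m + 1) j
        + f (m + 1) (m + 1) := by
  rw [Finset.sum_Icc_succ_top (by omega : 1 ≤ m + 1)]
  rw [Finset.sum_congr rfl (fun i _ => Finset.sum_Icc_succ_top (by omega : 1 ≤ m + 1) (f i)),
    Finset.sum_add_distrib, Finset.sum_Icc_succ_top (by omega : 1 ≤ m + 1)]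
  ring

/-- Inequality (5.4): `k(Σ_i i e_i² + 2 Σ_{i<j} i e_i e_j) ≤ (Σ_i i e_i)² + (k-1)(Σ_{i<k} i e_i)²`
for nonnegative reals `e_1, …, e_k`. -/
theorem radical_invariant_quadratic_inequality (k : ℕ) (hk : 1 ≤ k)
    (e : ℕ → ℝ) (he : ∀ i, 0 ≤ e i) :
    (k : ℝ) * (∑ i ∈ Finset.Icc 1 k, (i : ℝ) * e i ^ 2 +
        2 * ∑ i ∈ Finset.Icc 1 k, ∑ j ∈ Finset.Icc (i + 1) k, (i : ℝ) * e i * e j) ≤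
      (∑ i ∈ Finset.Icc 1 k, (i : ℝ) * e i) ^ 2 +
        ((k : ℝ) - 1) * (∑ i ∈ Finset.Icc 1 (k - 1), (i : ℝ) * e i) ^ 2 := by
  obtain ⟨m, rfl⟩ : ∃ m, k = m + 1 := ⟨k - 1, (Nat.succ_pred_eq_of_pos hk).symm⟩
  simp only [Nat.add_sub_cancel]
  rw [← min_double_sum (m + 1) e, sq_sum_eq, sq_sum_eq]
  rw [split_top m (fun i j => ((min i j : ℕ) : ℝ) * (e i * e j)),
    split_top m (fun i j => ((i : ℝ) * j) * (e i * e j))]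
  -- simplify cross terms: min i (m+1) = i for i ≤ m, etc.
  have hc1 : ∑ i ∈ Finset.Icc 1 m, ((min i (m + 1) : ℕ) : ℝ) * (e i * e (m + 1))
      = ∑ i ∈ Finset.Icc 1 m, (i : ℝ) * (e i * e (m + 1)) := by
    refine Finset.sum_congr rfl fun i hi => ?_
    rw [Finset.mem_Icc] at hi
    rw [min_eq_left (by omega)]
  have hc2 : ∑ j ∈ Finset.Icc 1 m, ((min (m + 1) j : ℕ) : ℝ) * (e (m + 1) * e j)
      = ∑ j ∈ Finset.Icc 1 m, (j : ℝ) * (e (m + 1) * e j) := by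
    refine Finset.sum_congr rfl fun j hj => ?_
    rw [Finset.mem_Icc] at hj
    rw [min_eq_right (by omega)]
  have hc1' : ∑ i ∈ Finset.Icc 1 m, ((i : ℝ) * (m + 1)) * (e i * e (m + 1))
      = ((m : ℝ) + 1) * ∑ i ∈ Finset.Icc 1 m, (i : ℝ) * (e i * e (m + 1)) := by
    rw [Finset.mul_sum]
    refine Finset.sum_congr rfl fun i _ => by ring
  have hc2' : ∑ j ∈ Finset.Icc 1 m, (((m : ℝ) + 1) * j) * (e (m + 1) * e j)
      = ((m : ℝ) + 1) * ∑ j ∈ Finset.Icc 1 m, (j : ℝ) * (e (m + 1) * e j) := by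
    rw [Finset.mul_sum]
    refine Finset.sum_congr rfl fun j _ => by ring
  have hmain : ∑ i ∈ Finset.Icc 1 m, ∑ j ∈ Finset.Icc 1 m, ((min i j : ℕ) : ℝ) * (e i * e j)
      ≤ ∑ i ∈ Finset.Icc 1 m, ∑ j ∈ Finset.Icc 1 m, ((i : ℝ) * j) * (e i * e j) := by
    refine Finset.sum_le_sum fun i hi => Finset.sum_le_sum fun j hj => ?_
    rw [Finset.mem_Icc] at hi hj
    have hmin : ((min i j : ℕ) : ℝ) ≤ (i : ℝ) * j := by
      have : min i j ≤ i * j := le_trans (min_le_left i j) (Nat.le_mul_of_pos_right i (by omega))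
      exact_mod_cast this
    exact mul_le_mul_of_nonneg_right hmin (mul_nonneg (he i) (he j))
  have hm0 : (0 : ℝ) ≤ (m : ℝ) + 1 := by positivity
  have h1 : ((m : ℝ) + 1) * ∑ i ∈ Finset.Icc 1 m, ((min i (m + 1) : ℕ) : ℝ) * (e i * e (m + 1))
      = ∑ i ∈ Finset.Icc 1 m, ((i : ℝ) * (m + 1)) * (e i * e (m + 1)) := by
    rw [hc1, hc1']
  have h2 : ((m : ℝ) + 1) * ∑ j ∈ Finset.Icc 1 m, ((min (m + 1) j : ℕ) : ℝ) * (e (m + 1) * e j)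
      = ∑ j ∈ Finset.Icc 1 m, (((m : ℝ) + 1) * j) * (e (m + 1) * e j) := by
    rw [hc2, hc2']
  have h3 := mul_le_mul_of_nonneg_left hmain hm0
  simp only [min_self] at *
  push_cast at *
  nlinarith [h1, h2, h3]
end

section
/- Let k ≥ 2 and n ≥ 1 be integers and let e_1,…,e_k be nonnegative integers with e_k ≥ 1 and Σ_{i=1}^k i·e_i = n. Then Σ_{i=1}^k i·e_i² + 2·Σ_{1 ≤ i < j ≤ k} i·e_i·e_j ≤ n² − (k−1)(2n−k); in particular this quantity is at most n² − 2n + 2. (Consequently, a nilpotent matrix in M_n(𝔽_q) whose Jordan type is a partition with largest part k ≥ 2 has radical invariant ρ ≤ n² − 2n + 2.) -/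
open scoped BigOperators

open Finset
lemma aux_sum_tails (k : ℕ) (e : ℕ → ℕ) :
    ∑ i ∈ Icc 1 k, ∑ j ∈ Icc i k, e j = ∑ i ∈ Icc 1 k, i * e i := by
  induction k with
  | zero => simp
  | succ k ih =>
      rw [Finset.sum_Icc_succ_top (by omega : 1 ≤ k + 1),
          Finset.sum_Icc_succ_top (by omega : 1 ≤ k + 1)]
      have h1 : ∀ i ∈ Icc 1 k, ∑ j ∈ Icc i (k+1), e j = ∑ j ∈ Icc i k, e j + e (k+1) := by
        intro i hi
        exact Finset.sum_Icc_succ_top (by simp at hi; omega) _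
      rw [Finset.sum_congr rfl h1, Finset.sum_add_distrib, ih, Finset.sum_const,
          Nat.card_Icc, Icc_self, Finset.sum_singleton]
      simp [Nat.add_sub_cancel]
      ring

lemma aux_rho_eq (k : ℕ) (e : ℕ → ℕ) :
    ∑ i ∈ Icc 1 k, i * e i ^ 2 +
      2 * ∑ i ∈ Icc 1 k, ∑ j ∈ Icc (i + 1) k, i * e i * e j
    = ∑ i ∈ Icc 1 k, (∑ j ∈ Icc i k, e j) ^ 2 := by
  induction k with
  | zero => simp
  | succ k ih =>
      rw [Finset.sum_Icc_succ_top (by omega : 1 ≤ k + 1),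
          Finset.sum_Icc_succ_top (by omega : 1 ≤ k + 1),
          Finset.sum_Icc_succ_top (by omega : 1 ≤ k + 1)]
      have h1 : ∀ i ∈ Icc 1 k, ∑ j ∈ Icc (i+1) (k+1), i * e i * e j
          = ∑ j ∈ Icc (i+1) k, i * e i * e j + i * e i * e (k+1) := by
        intro i hi
        exact Finset.sum_Icc_succ_top (by simp at hi; omega) _
      have h2 : ∀ i ∈ Icc 1 k, (∑ j ∈ Icc i (k+1), e j)^2
          = (∑ j ∈ Icc i k, e j)^2 + 2 * (∑ j ∈ Icc i k, e j) * e (k+1) + e (k+1)^2 := by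
        intro i hi
        rw [Finset.sum_Icc_succ_top (by simp at hi; omega)]
        ring
      rw [Finset.sum_congr rfl h1, Finset.sum_congr rfl h2]
      simp only [Finset.sum_add_distrib, Finset.sum_const, Nat.card_Icc,
        Nat.add_sub_cancel, ← Finset.sum_mul, ← Finset.mul_sum]
      have hA := aux_sum_tails k e
      have hempty : Icc (k+1+1) (k+1) = (∅ : Finset ℕ) := by
        apply Finset.Icc_eq_empty; omega
      rw [hempty]
      simp only [Finset.sum_empty, Finset.Icc_self, Finset.sum_singleton,
        smul_eq_mul, ← Finset.sum_mul, ← Finset.mul_sum]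
      rw [hA, ← ih]
      rw [Finset.sum_congr rfl (fun x _ => Finset.mul_sum (Icc (x+1) k) e (x * e x))]
      ring

lemma aux_sum_sq_le (S : Finset ℕ) (g : ℕ → ℕ) :
    ∑ i ∈ S, g i ^ 2 ≤ (∑ i ∈ S, g i) ^ 2 := by
  calc ∑ i ∈ S, g i ^ 2 ≤ ∑ i ∈ S, g i * ∑ j ∈ S, g j := by
        apply Finset.sum_le_sum
        intro i hi
        rw [sq]
        exact Nat.mul_le_mul_left _ (Finset.single_le_sum (fun _ _ => Nat.zero_le _) hi)
    _ = (∑ i ∈ S, g i) ^ 2 := by rw [sq, Finset.sum_mul]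

/-- Inequality (5.3) of Lemma 5.2: if `e_1, …, e_k` are the part multiplicities of a
partition of `n` with largest part `k ≥ 2`, then the radical invariant
`Σ_i i e_i² + 2 Σ_{i<j} i e_i e_j` is at most `n² - (k-1)(2n-k)`, hence at most `n² - 2n + 2`. -/
theorem nilpotent_radical_invariant_bound (k n : ℕ) (hk : 2 ≤ k) (hn : 1 ≤ n)
    (e : ℕ → ℕ) (hek : 1 ≤ e k) (hsum : ∑ i ∈ Finset.Icc 1 k, i * e i = n) :
    ((∑ i ∈ Finset.Icc 1 k, i * e i ^ 2 +
        2 * ∑ i ∈ Finset.Icc 1 k, ∑ j ∈ Finset.Icc (i + 1) k, i * e i * e j : ℕ) : ℤ) ≤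
        (n : ℤ) ^ 2 - ((k : ℤ) - 1) * (2 * (n : ℤ) - (k : ℤ)) ∧
      ((∑ i ∈ Finset.Icc 1 k, i * e i ^ 2 +
        2 * ∑ i ∈ Finset.Icc 1 k, ∑ j ∈ Finset.Icc (i + 1) k, i * e i * e j : ℕ) : ℤ) ≤
        (n : ℤ) ^ 2 - 2 * (n : ℤ) + 2 := by
  set s : ℕ → ℕ := fun i => ∑ j ∈ Icc i k, e j with hs
  have hρ := aux_rho_eq k e
  have hA : ∑ i ∈ Icc 1 k, s i = n := by rw [hs]; rw [aux_sum_tails k e, hsum]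
  have hs1 : ∀ i ∈ Icc 1 k, 1 ≤ s i := by
    intro i hi
    simp only [Finset.mem_Icc] at hi
    calc 1 ≤ e k := hek
      _ ≤ s i := Finset.single_le_sum (fun _ _ => Nat.zero_le _)
            (Finset.mem_Icc.mpr ⟨hi.2, le_refl k⟩)
  have hkn : k ≤ n := by
    calc k = ∑ _i ∈ Icc 1 k, 1 := by simp [Nat.card_Icc]
      _ ≤ ∑ i ∈ Icc 1 k, s i := Finset.sum_le_sum hs1
      _ = n := hA
  -- decompose s i = (s i - 1) + 1
  have hdec : ∀ i ∈ Icc 1 k, s i = (s i - 1) + 1 := fun i hi => (Nat.succ_pred_eq_of_pos (hs1 i hi)).symm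
  have htsum : ∑ i ∈ Icc 1 k, (s i - 1) = n - k := by
    have : ∑ i ∈ Icc 1 k, (s i - 1) + k = n := by
      calc ∑ i ∈ Icc 1 k, (s i - 1) + k
          = ∑ i ∈ Icc 1 k, (s i - 1) + ∑ _i ∈ Icc 1 k, 1 := by simp [Nat.card_Icc]
        _ = ∑ i ∈ Icc 1 k, ((s i - 1) + 1) := (Finset.sum_add_distrib).symm
        _ = ∑ i ∈ Icc 1 k, s i := Finset.sum_congr rfl (fun i hi => (hdec i hi).symm)
        _ = n := hA
    omega
  have hbound : ∑ i ∈ Icc 1 k, s i ^ 2 ≤ (n - k)^2 + 2*(n-k) + k := by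
    calc ∑ i ∈ Icc 1 k, s i ^ 2
        = ∑ i ∈ Icc 1 k, ((s i - 1)^2 + 2*(s i - 1) + 1) := by
          apply Finset.sum_congr rfl
          intro i hi
          obtain ⟨t, ht⟩ : ∃ t, s i = t + 1 := ⟨s i - 1, hdec i hi⟩
          rw [ht, Nat.add_sub_cancel]; ring
      _ = ∑ i ∈ Icc 1 k, (s i - 1)^2 + 2 * (∑ i ∈ Icc 1 k, (s i - 1)) + k := by
          simp [Finset.sum_add_distrib, Finset.mul_sum, Nat.card_Icc]
      _ ≤ (n - k)^2 + 2*(n-k) + k := by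
          have := aux_sum_sq_le (Icc 1 k) (fun i => s i - 1)
          rw [htsum] at this ⊢
          omega
  have hfinal : (∑ i ∈ Finset.Icc 1 k, i * e i ^ 2 +
      2 * ∑ i ∈ Finset.Icc 1 k, ∑ j ∈ Finset.Icc (i + 1) k, i * e i * e j : ℕ)
      ≤ (n - k)^2 + 2*(n-k) + k := hρ ▸ hbound
  have hcast : ((∑ i ∈ Finset.Icc 1 k, i * e i ^ 2 +
      2 * ∑ i ∈ Finset.Icc 1 k, ∑ j ∈ Finset.Icc (i + 1) k, i * e i * e j : ℕ) : ℤ)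
      ≤ ((n:ℤ) - k)^2 + 2*((n:ℤ)-k) + k := by
    have := Int.ofNat_le.mpr hfinal
    push_cast [Nat.cast_sub hkn] at this
    exact_mod_cast this
  constructor
  · nlinarith [hcast]
  · have hk' : (2:ℤ) ≤ k := by exact_mod_cast hk
    have hkn' : (k:ℤ) ≤ n := by exact_mod_cast hkn
    nlinarith [hcast, hk', hkn']
end

section
/- Let r ≥ 1 be an integer. There exists a constant c > 0 such that for every odd prime power q, Σ_{S ∈ M_2(𝔽_q), S ≠ 0} q^{r(4 + ρ_S)/2} ≤ c·q^{3r+3}, where ρ_S is the radical invariant of S. (Consequently the sums Σ_{S ≠ 0} ψ(−ST)·G(S,0)^r and Σ_{S ≠ 0} ψ(−ST)·Π_{i=1}^r G(S,−M_i) over M_2(𝔽_q) are O(q^{3r+3}).) -/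
open scoped BigOperators

section Aux

variable {F : Type} [Field F] [Fintype F] [DecidableEq F]

lemma aux_eq_zero_of_trace (M : Matrix (Fin 2) (Fin 2) F)
    (h : ∀ Y : Matrix (Fin 2) (Fin 2) F, (M * Y).trace = 0) : M = 0 := by
  have h00 := h !![1,0;0,0]
  have h01 := h !![0,0;1,0]
  have h10 := h !![0,1;0,0]
  have h11 := h !![0,0;0,1]
  simp [Matrix.trace_fin_two, Matrix.mul_apply, Fin.sum_univ_two] at h00 h01 h10 h11
  ext i j
  fin_cases i <;> fin_cases j <;> simp [h00, h01, h10, h11]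

lemma aux_mem_radical_iff {S X : Matrix (Fin 2) (Fin 2) F} :
    X ∈ radical F S ↔ S * X + X * S = 0 := by
  have key : ∀ Y : Matrix (Fin 2) (Fin 2) F,
      (S * (X * Y + Y * X)).trace = ((S * X + X * S) * Y).trace := by
    intro Y
    rw [Matrix.mul_add, Matrix.add_mul, Matrix.trace_add, Matrix.trace_add,
      ← Matrix.mul_assoc, ← Matrix.mul_assoc, Matrix.trace_mul_cycle S Y X]
  have hmem : X ∈ radical F S ↔ ∀ Y : Matrix (Fin 2) (Fin 2) F,
      (S * (X * Y + Y * X)).trace = 0 := Iff.rfl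
  rw [hmem]
  constructor
  · intro h
    apply aux_eq_zero_of_trace
    intro Y
    rw [← key, h Y]
  · intro h Y
    rw [key, h, Matrix.zero_mul, Matrix.trace_zero]

lemma aux_rho_le_two (S : Matrix (Fin 2) (Fin 2) F) (i j k l : Fin 2)
    (h : ∀ X : Matrix (Fin 2) (Fin 2) F,
      S * X + X * S = 0 → X i j = 0 → X k l = 0 → X = 0) :
    rho F S ≤ 2 := by
  let φ : radical F S →ₗ[F] F × F :=
    { toFun := fun X => (X.1 i j, X.1 k l)
      map_add' := by intros; rfl
      map_smul' := by intros; rfl }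
  have hinj : Function.Injective φ := by
    rw [injective_iff_map_eq_zero]
    intro X hX
    have h1 : (X : Matrix (Fin 2) (Fin 2) F) i j = 0 := congrArg Prod.fst hX
    have h2 : (X : Matrix (Fin 2) (Fin 2) F) k l = 0 := congrArg Prod.snd hX
    exact Subtype.ext (h X.1 (aux_mem_radical_iff.mp X.2) h1 h2)
  have := LinearMap.finrank_le_finrank_of_injective hinj
  simpa [rho, Module.finrank_prod] using this

lemma aux_entries (S X : Matrix (Fin 2) (Fin 2) F) (hX : S * X + X * S = 0) :
    (S 0 0 * X 0 0 + S 0 1 * X 1 0 + (X 0 0 * S 0 0 + X 0 1 * S 1 0) = 0) ∧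
    (S 0 0 * X 0 1 + S 0 1 * X 1 1 + (X 0 0 * S 0 1 + X 0 1 * S 1 1) = 0) ∧
    (S 1 0 * X 0 0 + S 1 1 * X 1 0 + (X 1 0 * S 0 0 + X 1 1 * S 1 0) = 0) ∧
    (S 1 0 * X 0 1 + S 1 1 * X 1 1 + (X 1 0 * S 0 1 + X 1 1 * S 1 1) = 0) := by
  have e00 := congrFun (congrFun hX 0) 0
  have e01 := congrFun (congrFun hX 0) 1
  have e10 := congrFun (congrFun hX 1) 0
  have e11 := congrFun (congrFun hX 1) 1
  simp [Matrix.mul_apply, Matrix.add_apply, Fin.sum_univ_two] at e00 e01 e10 e11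
  exact ⟨e00, e01, e10, e11⟩

lemma aux_rho_le_two' (h2 : (2 : F) ≠ 0) (S : Matrix (Fin 2) (Fin 2) F) (hS : S ≠ 0) :
    rho F S ≤ 2 := by
  by_cases ht : S 0 0 + S 1 1 ≠ 0
  · apply aux_rho_le_two S 0 0 1 1
    intro X hX hx hw
    obtain ⟨E1, E2, E3, E4⟩ := aux_entries S X hX
    have hy : X 0 1 = 0 := by
      have h : (S 0 0 + S 1 1) * X 0 1 = 0 := by
        linear_combination E2 - S 0 1 * hw - S 0 1 * hx
      exact (mul_eq_zero.mp h).resolve_left ht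
    have hz : X 1 0 = 0 := by
      have h : (S 0 0 + S 1 1) * X 1 0 = 0 := by
        linear_combination E3 - S 1 0 * hw - S 1 0 * hx
      exact (mul_eq_zero.mp h).resolve_left ht
    ext i j
    fin_cases i <;> fin_cases j <;> simp [hx, hy, hz, hw]
  · push_neg at ht
    by_cases ha : S 0 0 ≠ 0
    · apply aux_rho_le_two S 0 1 1 0
      intro X hX hy hz
      obtain ⟨E1, E2, E3, E4⟩ := aux_entries S X hX
      have hx : X 0 0 = 0 := by
        have h : 2 * S 0 0 * X 0 0 = 0 := by
          linear_combination E1 - S 0 1 * hz - S 1 0 * hy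
        have := mul_eq_zero.mp h
        rcases this with h' | h'
        · exact absurd ((mul_eq_zero.mp h').resolve_left h2) ha
        · exact h'
      have hw : X 1 1 = 0 := by
        have hd : S 1 1 ≠ 0 := by
          intro h'
          apply ha
          rw [h', add_zero] at ht
          exact ht
        have h : 2 * S 1 1 * X 1 1 = 0 := by
          linear_combination E4 - S 0 1 * hz - S 1 0 * hy
        have := mul_eq_zero.mp h
        rcases this with h' | h'
        · exact absurd ((mul_eq_zero.mp h').resolve_left h2) hd
        · exact h'
      ext i j
      fin_cases i <;> fin_cases j <;> simp [hx, hy, hz, hw]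
    · push_neg at ha
      have hd : S 1 1 = 0 := by rw [ha, zero_add] at ht; exact ht
      by_cases hb : S 0 1 ≠ 0
      · apply aux_rho_le_two S 0 1 1 1
        intro X hX hy hw
        obtain ⟨E1, E2, E3, E4⟩ := aux_entries S X hX
        have hx : X 0 0 = 0 := by
          have h : S 0 1 * X 0 0 = 0 := by
            linear_combination E2 - S 0 1 * hw - S 0 0 * hy - S 1 1 * hy + X 0 0 * ha - X 0 0 * ha
          exact (mul_eq_zero.mp h).resolve_left hb
        have hz : X 1 0 = 0 := by
          have h : S 0 1 * X 1 0 = 0 := by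
            linear_combination E1 - 2 * S 0 0 * hx - S 1 0 * hy
          exact (mul_eq_zero.mp h).resolve_left hb
        ext i j
        fin_cases i <;> fin_cases j <;> simp [hx, hy, hz, hw]
      · push_neg at hb
        by_cases hc : S 1 0 ≠ 0
        · apply aux_rho_le_two S 1 0 1 1
          intro X hX hz hw
          obtain ⟨E1, E2, E3, E4⟩ := aux_entries S X hX
          have hx : X 0 0 = 0 := by
            have h : S 1 0 * X 0 0 = 0 := by
              linear_combination E3 - S 1 1 * hz - S 0 0 * hz - S 1 0 * hw
            exact (mul_eq_zero.mp h).resolve_left hc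
          have hy : X 0 1 = 0 := by
            have h : S 1 0 * X 0 1 = 0 := by
              linear_combination E1 - 2 * S 0 0 * hx - S 0 1 * hz
            exact (mul_eq_zero.mp h).resolve_left hc
          ext i j
          fin_cases i <;> fin_cases j <;> simp [hx, hy, hz, hw]
        · push_neg at hc
          exfalso
          apply hS
          ext i j
          fin_cases i <;> fin_cases j <;> simp [ha, hb, hc, hd]

lemma aux_rho_eq_zero (h2 : (2 : F) ≠ 0) (S : Matrix (Fin 2) (Fin 2) F)
    (ht : S 0 0 + S 1 1 ≠ 0) (hdet : S 0 0 * S 1 1 - S 0 1 * S 1 0 ≠ 0) :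
    rho F S = 0 := by
  have hbot : radical F S = ⊥ := by
    rw [Submodule.eq_bot_iff]
    intro X hXmem
    have hX := aux_mem_radical_iff.mp hXmem
    obtain ⟨E1, E2, E3, E4⟩ := aux_entries S X hX
    set a := S 0 0; set b := S 0 1; set c := S 1 0; set d := S 1 1
    set x := X 0 0; set y := X 0 1; set z := X 1 0; set w := X 1 1
    have hkey : (2 : F) * (a + d) ^ 2 * (a * d - b * c) ≠ 0 := by
      apply mul_ne_zero (mul_ne_zero h2 (pow_ne_zero 2 ht)) hdet
    have hx : x = 0 := by
      have h : 2 * (a + d) ^ 2 * (a * d - b * c) * x = 0 := by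
        linear_combination (a + d) * (d * (a + d) - b * c) * E1
          - c * d * (a + d) * E2 - b * d * (a + d) * E3 + b * c * (a + d) * E4
      exact (mul_eq_zero.mp h).resolve_left hkey
    have hw : w = 0 := by
      have h : 2 * (a + d) ^ 2 * (a * d - b * c) * w = 0 := by
        linear_combination (a + d) * (a * (a + d) - b * c) * E4
          - c * a * (a + d) * E2 - b * a * (a + d) * E3 + b * c * (a + d) * E1
      exact (mul_eq_zero.mp h).resolve_left hkey
    have hy : y = 0 := by
      have h : (a + d) * y = 0 := by
        linear_combination E2 - b * hx - b * hw
      exact (mul_eq_zero.mp h).resolve_left ht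
    have hz : z = 0 := by
      have h : (a + d) * z = 0 := by
        linear_combination E3 - c * hx - c * hw
      exact (mul_eq_zero.mp h).resolve_left ht
    ext i j
    fin_cases i <;> fin_cases j <;> assumption
  rw [rho, hbot, finrank_bot]

lemma aux_two_ne_zero (hodd : Odd (Fintype.card F)) : (2 : F) ≠ 0 := by
  intro h
  have : CharP F (ringChar F) := ringChar.charP F
  obtain ⟨n, hp, hcard⟩ := FiniteField.card F (ringChar F)
  have hdvd : ringChar F ∣ 2 := by
    have := (CharP.cast_eq_zero_iff F (ringChar F) 2).mp (by exact_mod_cast h)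
    exact this
  have h2 : ringChar F = 2 := (Nat.prime_dvd_prime_iff_eq hp Nat.prime_two).mp hdvd
  rw [hcard, h2] at hodd
  have : ¬ Odd (2 ^ (n : ℕ)) := by
    simp [Nat.even_pow.mpr ⟨even_two, n.ne_zero⟩, Nat.not_odd_iff_even]
  exact this hodd

lemma aux_card_bad (F : Type) [Field F] [Fintype F] [DecidableEq F] :
    (Finset.univ.filter (fun S : Matrix (Fin 2) (Fin 2) F =>
      S 0 0 + S 1 1 = 0 ∨ S 0 0 * S 1 1 - S 0 1 * S 1 0 = 0)).card
      ≤ 4 * Fintype.card F ^ 3 := by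
  classical
  set q := Fintype.card F
  have hcard3 : (Finset.univ : Finset (F × F × F)).card = q ^ 3 := by
    simp [Fintype.card_prod, pow_succ, pow_zero, q]
    ring
  -- four pieces
  have hB : ∀ (P : Matrix (Fin 2) (Fin 2) F → Prop) [DecidablePred P]
      (g : Matrix (Fin 2) (Fin 2) F → F × F × F),
      (Set.InjOn g (Finset.univ.filter (fun S => P S))) →
      (Finset.univ.filter (fun S => P S)).card ≤ q ^ 3 := by
    intro P _ g hg
    rw [← hcard3]
    exact Finset.card_le_card_of_injOn g (fun _ _ => Finset.mem_univ _) hg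
  have hsub : (Finset.univ.filter (fun S : Matrix (Fin 2) (Fin 2) F =>
      S 0 0 + S 1 1 = 0 ∨ S 0 0 * S 1 1 - S 0 1 * S 1 0 = 0)) ⊆
      (Finset.univ.filter (fun S : Matrix (Fin 2) (Fin 2) F => S 0 0 + S 1 1 = 0)) ∪
      ((Finset.univ.filter (fun S : Matrix (Fin 2) (Fin 2) F =>
        S 0 0 ≠ 0 ∧ S 0 0 * S 1 1 - S 0 1 * S 1 0 = 0)) ∪
      ((Finset.univ.filter (fun S : Matrix (Fin 2) (Fin 2) F => S 0 0 = 0 ∧ S 0 1 = 0)) ∪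
       (Finset.univ.filter (fun S : Matrix (Fin 2) (Fin 2) F => S 0 0 = 0 ∧ S 1 0 = 0)))) := by
    intro S hS
    simp only [Finset.mem_filter, Finset.mem_univ, true_and, Finset.mem_union] at hS ⊢
    rcases hS with h | h
    · exact Or.inl h
    · by_cases ha : S 0 0 = 0
      · have : S 0 1 * S 1 0 = 0 := by linear_combination S 1 1 * ha - h
        rcases mul_eq_zero.mp this with h' | h'
        · exact Or.inr (Or.inr (Or.inl ⟨ha, h'⟩))
        · exact Or.inr (Or.inr (Or.inr ⟨ha, h'⟩))
      · exact Or.inr (Or.inl ⟨ha, h⟩)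
  have ext2 : ∀ S S' : Matrix (Fin 2) (Fin 2) F,
      S 0 0 = S' 0 0 → S 0 1 = S' 0 1 → S 1 0 = S' 1 0 → S 1 1 = S' 1 1 → S = S' := by
    intro S S' h1 h2 h3 h4
    ext i j
    fin_cases i <;> fin_cases j <;> assumption
  have c1 : (Finset.univ.filter (fun S : Matrix (Fin 2) (Fin 2) F =>
      S 0 0 + S 1 1 = 0)).card ≤ q ^ 3 := by
    apply hB _ (fun S => (S 0 0, S 0 1, S 1 0))
    intro S hS S' hS' hg
    simp only [Finset.coe_filter, Set.mem_setOf_eq, Finset.mem_univ, true_and] at hS hS'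
    obtain ⟨h1, h2, h3⟩ : S 0 0 = S' 0 0 ∧ S 0 1 = S' 0 1 ∧ S 1 0 = S' 1 0 := by
      simpa [Prod.ext_iff] using hg
    exact ext2 S S' h1 h2 h3 (by linear_combination hS - hS' - h1)
  have c2 : (Finset.univ.filter (fun S : Matrix (Fin 2) (Fin 2) F =>
      S 0 0 ≠ 0 ∧ S 0 0 * S 1 1 - S 0 1 * S 1 0 = 0)).card ≤ q ^ 3 := by
    apply hB _ (fun S => (S 0 0, S 0 1, S 1 0))
    intro S hS S' hS' hg
    simp only [Finset.coe_filter, Set.mem_setOf_eq, Finset.mem_univ, true_and] at hS hS'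
    obtain ⟨h1, h2, h3⟩ : S 0 0 = S' 0 0 ∧ S 0 1 = S' 0 1 ∧ S 1 0 = S' 1 0 := by
      simpa [Prod.ext_iff] using hg
    apply ext2 S S' h1 h2 h3
    have key : S 0 0 * (S 1 1 - S' 1 1) = 0 := by
      linear_combination hS.2 - hS'.2 - S' 1 1 * h1 + S 1 0 * h2 + S' 0 1 * h3
    exact sub_eq_zero.mp ((mul_eq_zero.mp key).resolve_left hS.1)
  have c3 : (Finset.univ.filter (fun S : Matrix (Fin 2) (Fin 2) F =>
      S 0 0 = 0 ∧ S 0 1 = 0)).card ≤ q ^ 3 := by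
    apply hB _ (fun S => (S 1 0, S 1 1, S 0 0))
    intro S hS S' hS' hg
    simp only [Finset.coe_filter, Set.mem_setOf_eq, Finset.mem_univ, true_and] at hS hS'
    obtain ⟨h1, h2, h3⟩ : S 1 0 = S' 1 0 ∧ S 1 1 = S' 1 1 ∧ S 0 0 = S' 0 0 := by
      simpa [Prod.ext_iff] using hg
    exact ext2 S S' h3 (by rw [hS.2, hS'.2]) h1 h2
  have c4 : (Finset.univ.filter (fun S : Matrix (Fin 2) (Fin 2) F =>
      S 0 0 = 0 ∧ S 1 0 = 0)).card ≤ q ^ 3 := by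
    apply hB _ (fun S => (S 0 1, S 1 1, S 0 0))
    intro S hS S' hS' hg
    simp only [Finset.coe_filter, Set.mem_setOf_eq, Finset.mem_univ, true_and] at hS hS'
    obtain ⟨h1, h2, h3⟩ : S 0 1 = S' 0 1 ∧ S 1 1 = S' 1 1 ∧ S 0 0 = S' 0 0 := by
      simpa [Prod.ext_iff] using hg
    exact ext2 S S' h3 h1 (by rw [hS.2, hS'.2]) h2
  calc (Finset.univ.filter (fun S : Matrix (Fin 2) (Fin 2) F =>
      S 0 0 + S 1 1 = 0 ∨ S 0 0 * S 1 1 - S 0 1 * S 1 0 = 0)).card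
      ≤ _ := Finset.card_le_card hsub
    _ ≤ _ := Finset.card_union_le _ _
    _ ≤ q ^ 3 + ((Finset.univ.filter (fun S : Matrix (Fin 2) (Fin 2) F =>
        S 0 0 ≠ 0 ∧ S 0 0 * S 1 1 - S 0 1 * S 1 0 = 0)) ∪ _).card := by
        gcongr
    _ ≤ q ^ 3 + (q ^ 3 + (q ^ 3 + q ^ 3)) := by
        gcongr
        calc _ ≤ _ := Finset.card_union_le _ _
          _ ≤ q ^ 3 + _ := by gcongr
          _ ≤ q ^ 3 + (q ^ 3 + q ^ 3) := by
              gcongr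
              calc _ ≤ _ := Finset.card_union_le _ _
                _ ≤ q ^ 3 + q ^ 3 := by gcongr
    _ = 4 * q ^ 3 := by ring

end Aux

/-- The incidence-contribution bound of Table 1: for `r ≥ 1`,
`Σ_{S ≠ 0 in M_2(F_q)} q^{r(4+ρ_S)/2} ≤ c q^{3r+3}` uniformly over odd `q`. -/
theorem rho_sum_rank_two (r : ℕ) (hr : 1 ≤ r) :
    ∃ c : ℝ, 0 < c ∧
      ∀ (F : Type) [Field F] [Fintype F] [DecidableEq F],
        Odd (Fintype.card F) →
        ∑ S ∈ Finset.univ.filter (fun S : Matrix (Fin 2) (Fin 2) F => S ≠ 0),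
            (Fintype.card F : ℝ) ^ ((r : ℝ) * (4 + (rho F S : ℝ)) / 2) ≤
          c * (Fintype.card F : ℝ) ^ (3 * r + 3) := by
  refine ⟨5, by norm_num, ?_⟩
  intro F _ _ _ hodd
  classical
  set q := Fintype.card F with hq
  have h2F : (2 : F) ≠ 0 := aux_two_ne_zero hodd
  have hq2 : 1 < q := Fintype.one_lt_card
  have hq1R : (1 : ℝ) ≤ (q : ℝ) := by exact_mod_cast hq2.le
  set P : Matrix (Fin 2) (Fin 2) F → Prop :=
    fun S => S 0 0 + S 1 1 = 0 ∨ S 0 0 * S 1 1 - S 0 1 * S 1 0 = 0 with hP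
  set f : Matrix (Fin 2) (Fin 2) F → ℝ :=
    fun S => (q : ℝ) ^ ((r : ℝ) * (4 + (rho F S : ℝ)) / 2) with hf
  set A : Finset (Matrix (Fin 2) (Fin 2) F) :=
    Finset.univ.filter (fun S => S ≠ 0) with hA
  have hsplit : ∑ S ∈ A, f S = ∑ S ∈ A.filter P, f S + ∑ S ∈ A.filter (fun S => ¬ P S), f S :=
    (Finset.sum_filter_add_sum_filter_not A P f).symm
  -- bound on the bad part
  have hbound1 : ∀ S ∈ A.filter P, f S ≤ (q : ℝ) ^ (3 * r) := by
    intro S hS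
    simp only [hA, Finset.mem_filter, Finset.mem_univ, true_and] at hS
    have hrho : rho F S ≤ 2 := aux_rho_le_two' h2F S hS.1
    have hrhoR : ((rho F S : ℕ) : ℝ) ≤ 2 := by exact_mod_cast hrho
    have hexp : (r : ℝ) * (4 + (rho F S : ℝ)) / 2 ≤ ((3 * r : ℕ) : ℝ) := by
      push_cast
      have hr0 : (0 : ℝ) ≤ (r : ℝ) := Nat.cast_nonneg r
      nlinarith
    calc f S ≤ (q : ℝ) ^ (((3 * r : ℕ) : ℝ)) :=
          Real.rpow_le_rpow_of_exponent_le hq1R hexp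
      _ = (q : ℝ) ^ (3 * r) := Real.rpow_natCast _ _
  have hbound2 : ∀ S ∈ A.filter (fun S => ¬ P S), f S = (q : ℝ) ^ (2 * r) := by
    intro S hS
    simp only [Finset.mem_filter] at hS
    have hnp := hS.2
    simp only [hP, not_or] at hnp
    have hrho : rho F S = 0 := aux_rho_eq_zero h2F S hnp.1 hnp.2
    have : (r : ℝ) * (4 + (rho F S : ℝ)) / 2 = ((2 * r : ℕ) : ℝ) := by
      rw [hrho]; push_cast; ring
    rw [hf]
    simp only
    rw [this, Real.rpow_natCast]
  have hcard1 : (A.filter P).card ≤ 4 * q ^ 3 := by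
    calc (A.filter P).card ≤ (Finset.univ.filter P).card := by
          apply Finset.card_le_card
          intro S hS
          simp only [hA, Finset.mem_filter, Finset.mem_univ, true_and] at hS ⊢
          exact hS.2
      _ ≤ 4 * q ^ 3 := aux_card_bad F
  have hcard2 : (A.filter (fun S => ¬ P S)).card ≤ q ^ 4 := by
    have : Fintype.card (Matrix (Fin 2) (Fin 2) F) = q ^ 4 := by
      show Fintype.card (Fin 2 → Fin 2 → F) = q ^ 4
      simp [Fintype.card_fun]
      ring
    calc (A.filter (fun S => ¬ P S)).card ≤ Fintype.card (Matrix (Fin 2) (Fin 2) F) :=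
          Finset.card_filter_le _ _ |>.trans (Finset.card_filter_le _ _) |>.trans
            (le_of_eq (Finset.card_univ))
      _ = q ^ 4 := this
  have hq0R : (0 : ℝ) < (q : ℝ) := lt_of_lt_of_le one_pos hq1R
  have key : ∑ S ∈ A, f S ≤
      (4 * q ^ 3 : ℕ) * (q : ℝ) ^ (3 * r) + (q ^ 4 : ℕ) * (q : ℝ) ^ (2 * r) := by
    rw [hsplit]
    have hpow3 : (0 : ℝ) ≤ (q : ℝ) ^ (3 * r) := by positivity
    have hpow2 : (0 : ℝ) ≤ (q : ℝ) ^ (2 * r) := by positivity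
    have b1 : ∑ S ∈ A.filter P, f S ≤ ((4 * q ^ 3 : ℕ) : ℝ) * (q : ℝ) ^ (3 * r) := by
      calc ∑ S ∈ A.filter P, f S ≤ (A.filter P).card • (q : ℝ) ^ (3 * r) :=
            Finset.sum_le_card_nsmul _ _ _ hbound1
        _ = ((A.filter P).card : ℝ) * (q : ℝ) ^ (3 * r) := by rw [nsmul_eq_mul]
        _ ≤ ((4 * q ^ 3 : ℕ) : ℝ) * (q : ℝ) ^ (3 * r) := by
            apply mul_le_mul_of_nonneg_right _ hpow3
            exact_mod_cast hcard1
    have b2 : ∑ S ∈ A.filter (fun S => ¬ P S), f S ≤ ((q ^ 4 : ℕ) : ℝ) * (q : ℝ) ^ (2 * r) := by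
      calc ∑ S ∈ A.filter (fun S => ¬ P S), f S
          = ((A.filter (fun S => ¬ P S)).card : ℝ) * (q : ℝ) ^ (2 * r) := by
            rw [Finset.sum_congr rfl hbound2, Finset.sum_const, nsmul_eq_mul]
        _ ≤ ((q ^ 4 : ℕ) : ℝ) * (q : ℝ) ^ (2 * r) := by
            apply mul_le_mul_of_nonneg_right _ hpow2
            exact_mod_cast hcard2
    exact add_le_add b1 b2
  have final : ((4 * q ^ 3 : ℕ) : ℝ) * (q : ℝ) ^ (3 * r) + ((q ^ 4 : ℕ) : ℝ) * (q : ℝ) ^ (2 * r)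
      ≤ 5 * (q : ℝ) ^ (3 * r + 3) := by
    push_cast
    have e1 : (4 : ℝ) * (q : ℝ) ^ 3 * (q : ℝ) ^ (3 * r) = 4 * (q : ℝ) ^ (3 * r + 3) := by
      rw [pow_add]; ring
    have e2 : (q : ℝ) ^ 4 * (q : ℝ) ^ (2 * r) = (q : ℝ) ^ (2 * r + 4) := by
      rw [pow_add]; ring
    rw [e1, e2]
    have h3 : (q : ℝ) ^ (2 * r + 4) ≤ (q : ℝ) ^ (3 * r + 3) := by
      apply pow_le_pow_right₀ hq1R
      omega
    linarith
  calc ∑ S ∈ A, f S ≤ _ := key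
    _ ≤ 5 * (q : ℝ) ^ (3 * r + 3) := final
end
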